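/- arXiv:2510.24032 — 2 statements merged into one kernel-verified Lean document; each statement's English description precedes it below -/
import Mathlib

section
/- Let θ : BS(2,3) → BS(2,3) be the unique group homomorphism with θ(a) = a⁻⁵ and θ(t) = t, and let φ : BS(2,3) → Q(2,3) be the unique group homomorphism with φ(a) = (1,0) and φ(t) = (0,1). Then ⋂_{k=1}^∞ im θ^k = φ^{-1}(0 ⋊ ℤ), the preimage under φ of the subgroup {(0, y) : y ∈ ℤ} of Q(2,3), and this subgroup ⋂_{k=1}^∞ im θ^k is not a normal subgroup of BS(2,3). -/
open Multiplicative

/-- `ℤ[1/6]` as an additive subgroup of `ℚ`. -/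
def Z16 : AddSubgroup ℚ where
  carrier := {q : ℚ | ∃ (m : ℤ) (k : ℕ), q = m / 6 ^ k}
  zero_mem' := ⟨0, 0, by norm_num⟩
  add_mem' := by
    rintro a b ⟨m, k, rfl⟩ ⟨m', k', rfl⟩
    refine ⟨m * 6 ^ k' + m' * 6 ^ k, k + k', ?_⟩
    push_cast
    rw [pow_add]
    field_simp
  neg_mem' := by
    rintro a ⟨m, k, rfl⟩
    exact ⟨-m, k, by push_cast; ring⟩

/-- Multiplication by `3/2` as an additive automorphism of `ℤ[1/6]`. -/
def mul32 : Z16 ≃+ Z16 where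
  toFun q := ⟨(3 / 2 : ℚ) * q, by
    obtain ⟨m, k, hq⟩ := q.2
    refine ⟨9 * m, k + 1, ?_⟩
    rw [hq]; push_cast; rw [pow_succ]; field_simp; ring⟩
  invFun q := ⟨(2 / 3 : ℚ) * q, by
    obtain ⟨m, k, hq⟩ := q.2
    refine ⟨4 * m, k + 1, ?_⟩
    rw [hq]; push_cast; rw [pow_succ]; field_simp; ring⟩
  left_inv q := Subtype.ext (by
    show (2 / 3 : ℚ) * ((3 / 2 : ℚ) * (q : ℚ)) = (q : ℚ)
    ring)
  right_inv q := Subtype.ext (by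
    show (3 / 2 : ℚ) * ((2 / 3 : ℚ) * (q : ℚ)) = (q : ℚ)
    ring)
  map_add' a b := Subtype.ext (by push_cast; ring)

/-- The action of `ℤ` on `ℤ[1/6]` in which `1` acts by multiplication by `3/2`. -/
def phiQ : Multiplicative ℤ →* MulAut (Multiplicative Z16) :=
  zpowersHom (MulAut (Multiplicative Z16)) (AddEquiv.toMultiplicative mul32)

/-- The group `Q(2,3) = ℤ[1/6] ⋊ ℤ`, where the generator `1 ∈ ℤ` acts on `ℤ[1/6]` by
multiplication by `3/2`. -/
abbrev Q23 : Type := SemidirectProduct (Multiplicative Z16) (Multiplicative ℤ) phiQ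

/-- The element `(1, 0)` of `Q(2,3)`. -/
def Qa : Q23 := SemidirectProduct.inl (ofAdd (⟨1, 1, 0, by norm_num⟩ : Z16))

/-- The element `(0, 1)` of `Q(2,3)`. -/
def Qt : Q23 := SemidirectProduct.inr (ofAdd (1 : ℤ))

/-- The single relator `t a² t⁻¹ a⁻³` of the Baumslag–Solitar group `BS(2,3)`,
with generator `0` playing the role of `a` and generator `1` the role of `t`. -/
def BSrels : Set (FreeGroup (Fin 2)) :=
  {FreeGroup.of 1 * FreeGroup.of 0 ^ 2 * (FreeGroup.of 1)⁻¹ * (FreeGroup.of 0 ^ 3)⁻¹}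

/-- The Baumslag–Solitar group `BS(2,3) = ⟨a, t ∣ t a² t⁻¹ = a³⟩`. -/
abbrev BS23 : Type := PresentedGroup BSrels

/-- The generator `a` of `BS(2,3)`. -/
def BSa : BS23 := PresentedGroup.of 0

/-- The generator `t` of `BS(2,3)`. -/
def BSt : BS23 := PresentedGroup.of 1

/-- The `k`-th iterate of a group endomorphism. -/
def iterHom {G : Type*} [Group G] (f : G →* G) : ℕ → (G →* G)
  | 0 => MonoidHom.id G
  | k + 1 => (iterHom f k).comp f


/-! ### Q-side helpers -/

/-- value of left component in ℚ -/
def lval (g : Q23) : ℚ := ((toAdd g.left : Z16) : ℚ)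

lemma mul32_val (x : Z16) : ((mul32 x : Z16) : ℚ) = 3/2 * (x : ℚ) := rfl

lemma mul32_symm_val (x : Z16) : ((mul32.symm x : Z16) : ℚ) = 2/3 * (x : ℚ) := rfl

lemma phiQ_val (y : ℤ) (x : Multiplicative Z16) :
    ((toAdd (phiQ (ofAdd y) x) : Z16) : ℚ) = (3/2 : ℚ) ^ y * ((toAdd x : Z16) : ℚ) := by
  show ((toAdd (((AddEquiv.toMultiplicative mul32) ^ (toAdd (ofAdd y))) x) : Z16) : ℚ) = _
  rw [toAdd_ofAdd]
  induction y using Int.induction_on generalizing x with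
  | zero => simp
  | succ n ih =>
      rw [zpow_add_one, MulAut.mul_apply, ih]
      have : ((toAdd ((AddEquiv.toMultiplicative mul32) x) : Z16) : ℚ)
          = 3/2 * ((toAdd x : Z16) : ℚ) := rfl
      rw [this, zpow_add_one₀ (by norm_num : (3/2:ℚ) ≠ 0)]
      ring
  | pred n ih =>
      rw [zpow_sub_one, MulAut.mul_apply, ih]
      have : ((toAdd (((AddEquiv.toMultiplicative mul32))⁻¹ x) : Z16) : ℚ)
          = 2/3 * ((toAdd x : Z16) : ℚ) := rfl
      rw [this, zpow_sub_one₀ (by norm_num : (3/2:ℚ) ≠ 0)]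
      ring

lemma lval_mul (g h : Q23) :
    lval (g * h) = lval g + (3/2 : ℚ) ^ (toAdd g.right) * lval h := by
  unfold lval
  rw [SemidirectProduct.mul_left]
  have : phiQ g.right h.left = phiQ (ofAdd (toAdd g.right)) h.left := by simp
  rw [toAdd_mul]
  push_cast
  rw [this, phiQ_val]

lemma lval_inv (g : Q23) :
    lval g⁻¹ = -((3/2 : ℚ) ^ (-(toAdd g.right)) * lval g) := by
  unfold lval
  rw [SemidirectProduct.inv_left]
  have : phiQ g.right⁻¹ g.left⁻¹ = phiQ (ofAdd (-(toAdd g.right))) g.left⁻¹ := by simp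
  rw [this, phiQ_val]
  push_cast [toAdd_inv]
  ring

lemma lval_one : lval (1 : Q23) = 0 := rfl

lemma lval_inr (w : Multiplicative ℤ) : lval (SemidirectProduct.inr w : Q23) = 0 := rfl

lemma lval_Qt : lval Qt = 0 := rfl

lemma lval_Qa : lval Qa = 1 := rfl

lemma right_Qa : toAdd (Qa.right) = 0 := rfl

lemma right_Qt : toAdd (Qt.right) = 1 := rfl

lemma lval_Qa_zpow (i : ℤ) : lval (Qa ^ i) = i := by
  unfold Qa
  rw [← map_zpow]
  unfold lval
  rw [SemidirectProduct.left_inl, toAdd_zpow]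
  push_cast
  simp

lemma lval_eq_zero_iff (g : Q23) : lval g = 0 ↔ g.left = 1 := by
  constructor
  · intro h
    have : (toAdd g.left : Z16) = 0 := Subtype.ext h
    simpa using congrArg ofAdd this
  · intro h; rw [lval, h]; rfl

lemma mem_inr_range_iff (g : Q23) :
    g ∈ (SemidirectProduct.inr : Multiplicative ℤ →* Q23).range ↔ lval g = 0 := by
  constructor
  · rintro ⟨w, rfl⟩; exact lval_inr w
  · intro h
    rw [lval_eq_zero_iff] at h
    refine ⟨g.right, ?_⟩
    conv_rhs => rw [← SemidirectProduct.inl_left_mul_inr_right g]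
    rw [h, map_one, one_mul]

/-! ### the subgroups `5^k ℤ[1/6] ⋊ ℤ` -/

def fZc (k : ℕ) : Set ℚ := {q | ∃ (m : ℤ) (n : ℕ), q = 5 ^ k * m / 6 ^ n}

lemma fZc_zero (k : ℕ) : (0 : ℚ) ∈ fZc k := ⟨0, 0, by norm_num⟩

lemma fZc_add {k : ℕ} {a b : ℚ} (ha : a ∈ fZc k) (hb : b ∈ fZc k) : a + b ∈ fZc k := by
  obtain ⟨m, n, rfl⟩ := ha; obtain ⟨m', n', rfl⟩ := hb
  refine ⟨m * 6 ^ n' + m' * 6 ^ n, n + n', ?_⟩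
  push_cast
  rw [pow_add]
  field_simp

lemma fZc_neg {k : ℕ} {a : ℚ} (ha : a ∈ fZc k) : -a ∈ fZc k := by
  obtain ⟨m, n, rfl⟩ := ha; exact ⟨-m, n, by push_cast; ring⟩

lemma fZc_mul32 {k : ℕ} {a : ℚ} (ha : a ∈ fZc k) : 3/2 * a ∈ fZc k := by
  obtain ⟨m, n, rfl⟩ := ha
  refine ⟨9 * m, n + 1, ?_⟩
  push_cast; rw [pow_succ]; field_simp; ring

lemma fZc_mul23 {k : ℕ} {a : ℚ} (ha : a ∈ fZc k) : 2/3 * a ∈ fZc k := by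
  obtain ⟨m, n, rfl⟩ := ha
  refine ⟨4 * m, n + 1, ?_⟩
  push_cast; rw [pow_succ]; field_simp; ring

lemma fZc_zpow32 {k : ℕ} (y : ℤ) {a : ℚ} (ha : a ∈ fZc k) : (3/2:ℚ) ^ y * a ∈ fZc k := by
  induction y using Int.induction_on with
  | zero => rw [zpow_zero, one_mul]; exact ha
  | succ n ih =>
      rw [zpow_add_one₀ (by norm_num : (3/2:ℚ) ≠ 0)]
      have := fZc_mul32 ih
      rw [show 3/2 * ((3/2:ℚ)^(n:ℤ) * a) = (3/2:ℚ)^(n:ℤ) * (3/2) * a by ring] at this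
      exact this
  | pred n ih =>
      rw [zpow_sub_one₀ (by norm_num : (3/2:ℚ) ≠ 0)]
      have := fZc_mul23 ih
      rw [show 2/3 * ((3/2:ℚ)^(-n:ℤ) * a) = (3/2:ℚ)^(-n:ℤ) * (3/2)⁻¹ * a by ring] at this
      exact this

/-- the subgroup `5^k ℤ[1/6] ⋊ ℤ` of `Q23` -/
def XQ (k : ℕ) : Subgroup Q23 where
  carrier := {g | lval g ∈ fZc k}
  one_mem' := by show lval 1 ∈ fZc k; rw [lval_one]; exact fZc_zero k
  mul_mem' := by
    intro a b ha hb
    show lval (a * b) ∈ fZc k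
    rw [lval_mul]
    exact fZc_add ha (fZc_zpow32 _ hb)
  inv_mem' := by
    intro a ha
    show lval a⁻¹ ∈ fZc k
    rw [lval_inv]
    exact fZc_neg (fZc_zpow32 _ ha)

lemma mem_XQ {k : ℕ} {g : Q23} : g ∈ XQ k ↔ lval g ∈ fZc k := Iff.rfl

/-! ### arithmetic lemmas -/

lemma five_dvd_of_fZc1 {i : ℤ} (h : ((i : ℚ)) ∈ fZc 1) : (5:ℤ) ∣ i := by
  obtain ⟨m, n, e⟩ := h
  have e2 : (i : ℚ) * 6 ^ n = 5 * m := by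
    rw [e]; field_simp
  have e3 : i * 6 ^ n = 5 * m := by exact_mod_cast e2
  have h5 : (5:ℤ) ∣ i * 6 ^ n := ⟨m, e3⟩
  have hp : Prime (5 : ℤ) := by norm_num
  rcases hp.dvd_mul.mp h5 with h | h
  · exact h
  · exfalso
    have := hp.dvd_of_dvd_pow h
    norm_num at this

lemma eq_zero_of_all_fZc {q : ℚ} (h : ∀ k : ℕ, q ∈ fZc (k + 1)) : q = 0 := by
  by_contra hq
  have hnum : q.num ≠ 0 := Rat.num_ne_zero.mpr hq
  set k := q.num.natAbs with hk
  obtain ⟨m, n, e⟩ := h k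
  have hq6 : q * 6 ^ n = 5 ^ (k+1) * m := by rw [e]; field_simp
  have hnum' : (q.num : ℚ) = q * q.den := (Rat.mul_den_eq_num q).symm
  have e2 : (q.num : ℚ) * 6 ^ n = 5 ^ (k+1) * m * q.den := by
    rw [hnum', show q * (q.den:ℚ) * 6^n = (q*6^n)*q.den by ring, hq6]
  have e3 : q.num * 6 ^ n = 5 ^ (k+1) * m * q.den := by exact_mod_cast e2
  have hdvd : (5:ℤ) ^ (k+1) ∣ q.num * 6 ^ n := ⟨m * q.den, by linarith [e3]⟩
  have hcop : IsCoprime ((5:ℤ) ^ (k+1)) (6 ^ n) := by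
    apply IsCoprime.pow
    rw [Int.isCoprime_iff_gcd_eq_one]
    norm_num
  have hdvd2 : (5:ℤ) ^ (k+1) ∣ q.num := hcop.dvd_of_dvd_mul_right hdvd
  have hle : (5:ℤ) ^ (k+1) ≤ |q.num| := Int.le_of_dvd (abs_pos.mpr hnum) ((dvd_abs _ _).mpr hdvd2)
  have h1 : k < 2 ^ (k+1) := (Nat.lt_two_pow_self (n := k)).trans (Nat.pow_lt_pow_succ (by norm_num))
  have h2 : 2 ^ (k+1) ≤ 5 ^ (k+1) := Nat.pow_le_pow_left (by norm_num) _
  have hlt : |q.num| < (5:ℤ) ^ (k+1) := by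
    rw [Int.abs_eq_natAbs, ← hk]
    exact_mod_cast h1.trans_le h2
  omega

/-! ### the multiplication-by-(-5) endomorphism of `Q23` -/

/-- multiplication by `-5` on `ℤ[1/6]`, as a hom of `Multiplicative Z16` -/
def neg5 : Multiplicative Z16 →* Multiplicative Z16 :=
  AddMonoidHom.toMultiplicative (zsmulAddGroupHom (-5) : Z16 →+ Z16)

lemma neg5_val (x : Multiplicative Z16) :
    ((toAdd (neg5 x) : Z16) : ℚ) = -5 * ((toAdd x : Z16) : ℚ) := by
  show (((-5 : ℤ) • (toAdd x) : Z16) : ℚ) = _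
  push_cast [zsmul_eq_mul]
  ring

lemma Z16_val_injective : Function.Injective (fun x : Multiplicative Z16 => ((toAdd x : Z16) : ℚ)) := by
  intro x y h
  have : (toAdd x : Z16) = toAdd y := Subtype.ext h
  simpa using congrArg ofAdd this

/-- the endomorphism of `Q23` acting by `-5` on `ℤ[1/6]` and trivially on `ℤ`. -/
def psiQ : Q23 →* Q23 :=
  SemidirectProduct.map neg5 (MonoidHom.id _) (by
    intro g
    refine MonoidHom.ext fun x => ?_
    apply Z16_val_injective
    show ((toAdd (neg5 (phiQ g x)) : Z16) : ℚ) = ((toAdd (phiQ g (neg5 x)) : Z16) : ℚ)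
    have hg : g = ofAdd (toAdd g) := rfl
    rw [neg5_val, hg, phiQ_val, phiQ_val, neg5_val]
    ring)

lemma psiQ_injective : Function.Injective psiQ := by
  intro x y h
  have hl := congrArg (fun z : Q23 => ((toAdd z.left : Z16) : ℚ)) h
  have hr := congrArg SemidirectProduct.right h
  simp only [psiQ, SemidirectProduct.map_left, SemidirectProduct.map_right, MonoidHom.id_apply] at hl hr
  rw [neg5_val, neg5_val] at hl
  have hleft : x.left = y.left := Z16_val_injective (by dsimp; linarith)
  calc x = SemidirectProduct.inl x.left * SemidirectProduct.inr x.right :=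
        (SemidirectProduct.inl_left_mul_inr_right x).symm
    _ = SemidirectProduct.inl y.left * SemidirectProduct.inr y.right := by rw [hleft, hr]
    _ = y := SemidirectProduct.inl_left_mul_inr_right y

lemma psiQ_Qa : psiQ Qa = Qa ^ (-5 : ℤ) := by
  unfold Qa
  rw [← map_zpow]
  show SemidirectProduct.map _ _ _ _ = _
  rw [SemidirectProduct.map_inl]
  congr 1

lemma psiQ_Qt : psiQ Qt = Qt := by
  unfold Qt
  show SemidirectProduct.map _ _ _ _ = _
  rw [SemidirectProduct.map_inr]
  rfl

/-! ### BS(2,3) side -/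

lemma BS_closure : Subgroup.closure {BSa, BSt} = ⊤ := by
  have h := PresentedGroup.closure_range_of BSrels
  have : Set.range (PresentedGroup.of : Fin 2 → BS23) = {BSa, BSt} := by
    ext x
    constructor
    · rintro ⟨i, rfl⟩
      fin_cases i
      · exact Or.inl rfl
      · exact Or.inr rfl
    · rintro (rfl | rfl)
      · exact ⟨0, rfl⟩
      · exact ⟨1, rfl⟩
  rwa [this] at h

lemma BS_rel : BSt * BSa ^ (2:ℤ) * BSt⁻¹ = BSa ^ (3:ℤ) := by
  have h : PresentedGroup.mk BSrels
      (FreeGroup.of 1 * FreeGroup.of 0 ^ 2 * (FreeGroup.of 1)⁻¹ * (FreeGroup.of 0 ^ 3)⁻¹) = 1 := by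
    apply (QuotientGroup.eq_one_iff _).mpr
    exact Subgroup.subset_normalClosure rfl
  rw [map_mul, map_mul, map_mul, map_inv, map_inv, map_pow, map_pow] at h
  have h2 : BSt * BSa ^ (2:ℕ) * BSt⁻¹ * (BSa ^ (3:ℕ))⁻¹ = 1 := h
  have h3 : BSt * BSa ^ (2:ℕ) * BSt⁻¹ = BSa ^ (3:ℕ) := mul_inv_eq_one.mp h2
  rw [show ((2:ℤ) = ((2:ℕ):ℤ)) from rfl, show ((3:ℤ) = ((3:ℕ):ℤ)) from rfl,
    zpow_natCast, zpow_natCast]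
  exact h3

lemma BS_rel9 (i : ℤ) : BSa ^ (9*i) = BSt * BSa ^ (6*i) * BSt⁻¹ := by
  have : BSt * (BSa ^ (2:ℤ)) ^ (3*i) * BSt⁻¹ = (BSa ^ (3:ℤ)) ^ (3*i) := by
    rw [← conj_zpow, BS_rel]
  rw [← zpow_mul, ← zpow_mul] at this
  rw [show (9*i) = 3*(3*i) by ring, ← this, show (2*(3*i)) = 6*i by ring]

lemma BS_rel6 (i : ℤ) : BSa ^ (6*i) = BSt * BSa ^ (4*i) * BSt⁻¹ := by
  have : BSt * (BSa ^ (2:ℤ)) ^ (2*i) * BSt⁻¹ = (BSa ^ (3:ℤ)) ^ (2*i) := by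
    rw [← conj_zpow, BS_rel]
  rw [← zpow_mul, ← zpow_mul] at this
  rw [show (6*i) = 3*(2*i) by ring, ← this, show (2*(2*i)) = 4*i by ring]

lemma BS_t_a (i : ℤ) : BSa ^ (9*i) * BSt = BSt * BSa ^ (6*i) := by
  rw [BS_rel9]; group

lemma BS_tinv_a (i : ℤ) : BSt⁻¹ * BSa ^ (6*i) = BSa ^ (4*i) * BSt⁻¹ := by
  rw [BS_rel6 i]; group

/-- the subgroup `⟨a⁻⁵, t⟩` -/
def HBS : Subgroup BS23 := Subgroup.closure {BSa ^ (-5:ℤ), BSt}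

lemma HBS_a5 (i : ℤ) : BSa ^ (5*i) ∈ HBS := by
  have h : (BSa ^ (-5:ℤ)) ^ (-i) ∈ HBS :=
    zpow_mem (Subgroup.subset_closure (Set.mem_insert _ _)) _
  rwa [← zpow_mul, show ((-5)*(-i) : ℤ) = 5*i by ring] at h

lemma HBS_t : BSt ∈ HBS := Subgroup.subset_closure (Set.mem_insert_of_mem _ rfl)

/-- covering of `BS23` by the cosets `a^(-i) * HBS` -/
lemma BS_cover (g : BS23) : ∃ i : ℤ, BSa ^ i * g ∈ HBS := by
  have hg : g ∈ Subgroup.closure {BSa, BSt} := by rw [BS_closure]; trivial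
  induction hg using Subgroup.closure_induction_left with
  | one => exact ⟨0, by simpa using one_mem HBS⟩
  | mul_left x hx y hy ih =>
      obtain ⟨i, hi⟩ := ih
      rcases hx with rfl | rfl
      · refine ⟨i - 1, ?_⟩
        have e : BSa ^ (i-1) * (BSa * y) = BSa ^ i * y := by
          rw [zpow_sub_one]; group
        rwa [e]
      · refine ⟨9*i, ?_⟩
        have e : BSa ^ (9*i) * (BSt * y) = BSt * BSa ^ (5*i) * (BSa ^ i * y) := by
          calc BSa ^ (9*i) * (BSt * y) = (BSa ^ (9*i) * BSt) * y := by group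
            _ = (BSt * BSa ^ (6*i)) * y := by rw [BS_t_a]
            _ = BSt * BSa ^ (5*i) * (BSa ^ i * y) := by
                rw [show (6*i) = 5*i + i by ring, zpow_add]; group
        rw [e]
        exact mul_mem (mul_mem HBS_t (HBS_a5 i)) hi
  | inv_mul_cancel x hx y hy ih =>
      obtain ⟨i, hi⟩ := ih
      rcases hx with rfl | rfl
      · refine ⟨i + 1, ?_⟩
        have e : BSa ^ (i+1) * (BSa⁻¹ * y) = BSa ^ i * y := by
          rw [zpow_add_one]; group
        rwa [e]
      · refine ⟨4*i, ?_⟩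
        have e : BSa ^ (4*i) * (BSt⁻¹ * y) = BSt⁻¹ * BSa ^ (5*i) * (BSa ^ i * y) := by
          calc BSa ^ (4*i) * (BSt⁻¹ * y) = (BSa ^ (4*i) * BSt⁻¹) * y := by group
            _ = (BSt⁻¹ * BSa ^ (6*i)) * y := by rw [BS_tinv_a]
            _ = BSt⁻¹ * BSa ^ (5*i) * (BSa ^ i * y) := by
                rw [show (6*i) = 5*i + i by ring, zpow_add]; group
        rw [e]
        exact mul_mem (mul_mem (Subgroup.inv_mem _ HBS_t) (HBS_a5 i)) hi

/-! ### iterHom lemmas -/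

lemma iterHom_succ' {G : Type*} [Group G] (f : G →* G) (k : ℕ) (x : G) :
    iterHom f (k + 1) x = f (iterHom f k x) := by
  induction k generalizing x with
  | zero => rfl
  | succ k ih =>
      show iterHom f (k+1) (f x) = _
      rw [ih (f x)]
      rfl

theorem BS23_intersection_iterates_eq_comap_not_normal'
    (θ : BS23 →* BS23) (hθa : θ BSa = BSa ^ (-5 : ℤ)) (hθt : θ BSt = BSt)
    (φ : BS23 →* Q23) (hφa : φ BSa = Qa) (hφt : φ BSt = Qt) :
    (⨅ k : ℕ, (iterHom θ (k + 1)).range) =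
        Subgroup.comap φ (SemidirectProduct.inr : Multiplicative ℤ →* Q23).range ∧
      ¬ (⨅ k : ℕ, (iterHom θ (k + 1)).range).Normal := by
  -- iterates on generators
  have hiter_t : ∀ k, iterHom θ k BSt = BSt := by
    intro k
    induction k with
    | zero => rfl
    | succ k ih => show iterHom θ k (θ BSt) = BSt; rw [hθt, ih]
  have hiter_a : ∀ k, iterHom θ k BSa = BSa ^ ((-5:ℤ) ^ k) := by
    intro k
    induction k with
    | zero => simp; rfl
    | succ k ih =>
        show iterHom θ k (θ BSa) = _
        rw [hθa, map_zpow, ih, ← zpow_mul, pow_succ]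
  -- φ ∘ θ = ψ ∘ φ
  have hφθ : φ.comp θ = psiQ.comp φ := by
    have heq : Set.EqOn (⇑(φ.comp θ)) (⇑(psiQ.comp φ)) {BSa, BSt} := by
      rintro x (rfl | rfl)
      · show φ (θ BSa) = psiQ (φ BSa)
        rw [hθa, map_zpow, hφa, psiQ_Qa]
      · show φ (θ BSt) = psiQ (φ BSt)
        rw [hθt, hφt, psiQ_Qt]
    have h2 := MonoidHom.eqOn_closure heq
    exact MonoidHom.ext fun x => h2 (by rw [BS_closure]; trivial)
  -- HBS is inside the range of θ
  have hHle : HBS ≤ θ.range := by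
    rw [HBS, Subgroup.closure_le]
    rintro x (rfl | rfl)
    · exact ⟨BSa, by rw [hθa]⟩
    · exact ⟨BSt, by rw [hθt]⟩
  -- φ maps HBS into XQ 1
  have hHXQ : ∀ h ∈ HBS, φ h ∈ XQ 1 := by
    intro h hh
    have : HBS ≤ Subgroup.comap φ (XQ 1) := by
      rw [HBS, Subgroup.closure_le]
      rintro x (rfl | rfl)
      · show φ (BSa ^ (-5:ℤ)) ∈ XQ 1
        rw [map_zpow, hφa, mem_XQ, lval_Qa_zpow]
        exact ⟨-1, 0, by norm_num⟩
      · show φ BSt ∈ XQ 1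
        rw [hφt, mem_XQ, lval_Qt]
        exact fZc_zero 1
    exact this hh
  -- the crux: ker φ ≤ range θ
  have crux : ∀ g : BS23, φ g = 1 → g ∈ θ.range := by
    intro g hg
    obtain ⟨i, hi⟩ := BS_cover g
    have h1 : φ (BSa ^ i * g) ∈ XQ 1 := hHXQ _ hi
    rw [map_mul, hg, mul_one, map_zpow, hφa, mem_XQ, lval_Qa_zpow] at h1
    obtain ⟨j, rfl⟩ := five_dvd_of_fZc1 h1
    have hmem : BSa ^ (-(5*j)) * (BSa ^ (5*j) * g) ∈ θ.range := by
      apply mul_mem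
      · exact hHle (by rw [show (-(5*j)) = 5*(-j) by ring]; exact HBS_a5 (-j))
      · exact hHle hi
    rwa [← mul_assoc, ← zpow_add, neg_add_cancel, zpow_zero, one_mul] at hmem
  -- ker φ ≤ range of every iterate
  have kerle : ∀ (k : ℕ) (g : BS23), φ g = 1 → g ∈ (iterHom θ k).range := by
    intro k
    induction k with
    | zero => intro g _; exact ⟨g, rfl⟩
    | succ k ih =>
        intro g hg
        obtain ⟨h, rfl⟩ := crux g hg
        have hφh : φ h = 1 := by
          apply psiQ_injective
          have := DFunLike.congr_fun hφθ h
          simp only [MonoidHom.comp_apply] at this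
          rw [map_one, ← this, hg]
        obtain ⟨x, rfl⟩ := ih h hφh
        exact ⟨x, iterHom_succ' θ k x⟩
  -- ranges map into XQ
  have rangele : ∀ (k : ℕ) (x : BS23), φ (iterHom θ k x) ∈ XQ k := by
    intro k x
    have hcl : Subgroup.closure {BSa, BSt} ≤ Subgroup.comap (φ.comp (iterHom θ k)) (XQ k) := by
      rw [Subgroup.closure_le]
      rintro y (rfl | rfl)
      · show φ (iterHom θ k BSa) ∈ XQ k
        rw [hiter_a, map_zpow, hφa, mem_XQ, lval_Qa_zpow]
        exact ⟨(-1)^k, 0, by push_cast; rw [← mul_pow]; norm_num⟩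
      · show φ (iterHom θ k BSt) ∈ XQ k
        rw [hiter_t, hφt, mem_XQ, lval_Qt]
        exact fZc_zero k
    exact hcl (by rw [BS_closure]; trivial)
  -- Qt powers
  have hQt_zpow : ∀ m : ℤ, Qt ^ m = SemidirectProduct.inr (ofAdd m) := by
    intro m
    unfold Qt
    rw [← map_zpow]
    congr 1
    rw [← Int.ofAdd_mul, one_mul]
  -- the main equality
  have heq : (⨅ k : ℕ, (iterHom θ (k + 1)).range) =
      Subgroup.comap φ (SemidirectProduct.inr : Multiplicative ℤ →* Q23).range := by
    apply le_antisymm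
    · intro g hg
      rw [Subgroup.mem_iInf] at hg
      rw [Subgroup.mem_comap, mem_inr_range_iff]
      apply eq_zero_of_all_fZc
      intro k
      obtain ⟨x, rfl⟩ := hg k
      exact rangele (k+1) x
    · intro g hg
      obtain ⟨w, hw⟩ := Subgroup.mem_comap.mp hg
      rw [Subgroup.mem_iInf]
      intro k
      set m := toAdd w with hm
      have hker : φ (g * BSt ^ (-m)) = 1 := by
        rw [map_mul, map_zpow, hφt, hQt_zpow, ← hw, ← map_mul]
        have : w * ofAdd (-m) = 1 := by
          rw [ofAdd_neg, hm, ofAdd_toAdd, mul_inv_cancel]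
        rw [this, map_one]
      have h1 : g * BSt ^ (-m) ∈ (iterHom θ (k+1)).range := kerle (k+1) _ hker
      have h2 : BSt ^ m ∈ (iterHom θ (k+1)).range :=
        ⟨BSt ^ m, by rw [map_zpow, hiter_t]⟩
      have := mul_mem h1 h2
      rwa [mul_assoc, ← zpow_add, neg_add_cancel, zpow_zero, mul_one] at this
  refine ⟨heq, ?_⟩
  intro hN
  have ht : BSt ∈ (⨅ k : ℕ, (iterHom θ (k + 1)).range) := by
    rw [heq, Subgroup.mem_comap, mem_inr_range_iff, hφt, lval_Qt]
  have hconj := hN.conj_mem _ ht BSa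
  rw [heq] at hconj
  have : lval (φ (BSa * BSt * BSa⁻¹)) = 0 :=
    (mem_inr_range_iff _).mp (Subgroup.mem_comap.mp hconj)
  rw [map_mul, map_mul, map_inv, hφa, hφt] at this
  rw [lval_mul, lval_mul, lval_inv, lval_Qa, lval_Qt] at this
  simp only [SemidirectProduct.mul_right, toAdd_mul, right_Qa, right_Qt] at this
  norm_num at this

/-- **Proposition.** With `θ` and `φ` as before, `⋂_{k≥1} im θᵏ = φ⁻¹(0 ⋊ ℤ)`, and this
subgroup is not normal in `BS(2,3)`. -/
theorem BS23_intersection_iterates_eq_comap_not_normal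
    (θ : BS23 →* BS23) (hθa : θ BSa = BSa ^ (-5 : ℤ)) (hθt : θ BSt = BSt)
    (φ : BS23 →* Q23) (hφa : φ BSa = Qa) (hφt : φ BSt = Qt) :
    (⨅ k : ℕ, (iterHom θ (k + 1)).range) =
        Subgroup.comap φ (SemidirectProduct.inr : Multiplicative ℤ →* Q23).range ∧
      ¬ (⨅ k : ℕ, (iterHom θ (k + 1)).range).Normal := by
  exact BS23_intersection_iterates_eq_comap_not_normal' θ hθa hθt φ hφa hφt
end

section
/- Let θ : BS(2,3) → BS(2,3) be the unique group homomorphism with θ(a) = a⁻⁵ and θ(t) = t. Then the subgroup ⋂_{k=1}^∞ im θ^k of BS(2,3) is a free group and is not finitely generated (hence it is a free group of infinite rank). -/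
open Multiplicative

namespace BSAux

/-! ### Arithmetic preliminaries -/

/-- `q` is twice an integer. -/
def TwoZ (q : ℚ) : Prop := ∃ m : ℤ, q = 2 * m

/-- representative of `q` modulo `2ℤ`. -/
def rep2 (q : ℚ) : ℚ := q - 2 * ⌊q / 2⌋

lemma rep2_eq_iff {a b : ℚ} : rep2 a = rep2 b ↔ TwoZ (a - b) := by
  constructor
  · intro h
    refine ⟨⌊a / 2⌋ - ⌊b / 2⌋, ?_⟩
    have : a - 2 * ⌊a / 2⌋ = b - 2 * ⌊b / 2⌋ := h
    push_cast at this ⊢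
    linarith
  · rintro ⟨k, hk⟩
    have ha : a = b + 2 * k := by linarith
    subst ha
    unfold rep2
    have : (b + 2 * (k:ℚ)) / 2 = b / 2 + (k : ℚ) := by ring
    rw [this, Int.floor_add_intCast]
    push_cast
    ring

lemma rep2_add_two (q : ℚ) : rep2 (q + 2) = rep2 q :=
  rep2_eq_iff.2 ⟨1, by ring⟩

lemma rep2_idem (q : ℚ) : rep2 (rep2 q) = rep2 q :=
  rep2_eq_iff.2 ⟨-⌊q / 2⌋, by unfold rep2; push_cast; ring⟩

lemma rep2_ne {a b : ℚ} {n : ℤ} {e f : ℕ}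
    (hab : a - b = (n : ℚ) / (2 ^ e * 3 ^ f))
    (hdvd : ¬ ((2:ℤ) ^ (e+1) * 3 ^ f ∣ n)) : rep2 a ≠ rep2 b := by
  intro h
  rcases rep2_eq_iff.1 h with ⟨k, hk⟩
  apply hdvd
  refine ⟨k, ?_⟩
  have h0 : ((2:ℚ) ^ e * 3 ^ f) ≠ 0 := by positivity
  have : (n : ℚ) = 2 * k * (2 ^ e * 3 ^ f) := by
    rw [hab] at hk
    field_simp at hk
    linarith [hk]
  have : (n : ℚ) = ((2 ^ (e+1) * 3 ^ f * k : ℤ) : ℚ) := by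
    push_cast
    rw [this]
    ring
  exact_mod_cast this

end BSAux
namespace BSAux

/-! ### Basic identities in BS(2,3) -/

lemma BS_relator :
    BSt * BSa ^ (2:ℕ) * BSt⁻¹ * (BSa ^ (3:ℕ))⁻¹ = 1 := by
  have h : (PresentedGroup.mk BSrels)
      (FreeGroup.of 1 * FreeGroup.of 0 ^ 2 * (FreeGroup.of 1)⁻¹ * (FreeGroup.of 0 ^ 3)⁻¹) = 1 := by
    apply (QuotientGroup.eq_one_iff _).2
    exact Subgroup.subset_normalClosure rfl
  simp only [map_mul, map_inv, map_pow] at h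
  exact h

lemma BS_rel : BSt * BSa ^ (2:ℕ) * BSt⁻¹ = BSa ^ (3:ℕ) :=
  mul_inv_eq_one.1 BS_relator

lemma BS_rel_z : BSt * BSa ^ (2:ℤ) * BSt⁻¹ = BSa ^ (3:ℤ) := by
  have := BS_rel
  rw [show ((2:ℤ)) = ((2:ℕ):ℤ) by norm_num, show ((3:ℤ)) = ((3:ℕ):ℤ) by norm_num,
    zpow_natCast, zpow_natCast]
  exact this

/-- `t a^{2m} t⁻¹ = a^{3m}` -/
lemma t_conj_pow (m : ℤ) : BSt * BSa ^ (2*m) * BSt⁻¹ = BSa ^ (3*m) := by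
  have h2 : BSa ^ (2*m) = (BSa ^ (2:ℤ)) ^ m := by rw [← zpow_mul]
  have h3 : BSa ^ (3*m) = (BSa ^ (3:ℤ)) ^ m := by rw [← zpow_mul]
  rw [h2, h3, ← BS_rel_z]
  calc BSt * (BSa ^ (2:ℤ)) ^ m * BSt⁻¹
      = (MulAut.conj BSt) ((BSa ^ (2:ℤ)) ^ m) := by simp [MulAut.conj_apply, mul_assoc]
    _ = ((MulAut.conj BSt) (BSa ^ (2:ℤ))) ^ m := map_zpow _ _ _
    _ = (BSt * BSa ^ (2:ℤ) * BSt⁻¹) ^ m := by simp [MulAut.conj_apply, mul_assoc]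

/-- `t * a^{2m} = a^{3m} * t` -/
lemma t_mul_pow (m : ℤ) : BSt * BSa ^ (2*m) = BSa ^ (3*m) * BSt := by
  have := t_conj_pow m
  calc BSt * BSa ^ (2*m) = (BSt * BSa ^ (2*m) * BSt⁻¹) * BSt := by group
    _ = BSa ^ (3*m) * BSt := by rw [this]

/-- `t⁻¹ * a^{3m} = a^{2m} * t⁻¹` -/
lemma tinv_mul_pow (m : ℤ) : BSt⁻¹ * BSa ^ (3*m) = BSa ^ (2*m) * BSt⁻¹ := by
  have := t_mul_pow m
  calc BSt⁻¹ * BSa ^ (3*m) = BSt⁻¹ * (BSa ^ (3*m) * BSt) * BSt⁻¹ := by group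
    _ = BSt⁻¹ * (BSt * BSa ^ (2*m)) * BSt⁻¹ := by rw [this]
    _ = BSa ^ (2*m) * BSt⁻¹ := by group

/-! ### Induction principle : left multiplication by generators -/

lemma BS_induction {P : BS23 → Prop} (h1 : P 1)
    (ha : ∀ g, P g → P (BSa * g)) (ha' : ∀ g, P g → P (BSa⁻¹ * g))
    (ht : ∀ g, P g → P (BSt * g)) (ht' : ∀ g, P g → P (BSt⁻¹ * g)) :
    ∀ g : BS23, P g := by
  intro g
  obtain ⟨x, rfl⟩ := PresentedGroup.mk_surjective BSrels g
  rw [← FreeGroup.mk_toWord (x := x)]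
  generalize x.toWord = L
  induction L with
  | nil => simpa [← FreeGroup.one_eq_mk] using h1
  | cons p L ih =>
    have hsplit : FreeGroup.mk (p :: L) = FreeGroup.mk [p] * FreeGroup.mk L := by
      rw [FreeGroup.mul_mk]; rfl
    rw [hsplit, map_mul]
    rcases p with ⟨i, b⟩
    have hof : ∀ j : Fin 2, (PresentedGroup.mk BSrels) (FreeGroup.mk [(j, true)])
        = PresentedGroup.of j := fun j => rfl
    have hofinv : ∀ j : Fin 2, (PresentedGroup.mk BSrels) (FreeGroup.mk [(j, false)])
        = (PresentedGroup.of j)⁻¹ := by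
      intro j
      have : FreeGroup.mk [(j, false)] = (FreeGroup.of j)⁻¹ := by
        rw [show FreeGroup.of j = FreeGroup.mk [(j, true)] from rfl, FreeGroup.inv_mk]
        rfl
      rw [this, map_inv]
      rfl
    match i, b with
    | 0, false => rw [hofinv 0]; exact ha' _ ih
    | 0, true => rw [hof 0]; exact ha _ ih
    | 1, false => rw [hofinv 1]; exact ht' _ ih
    | 1, true => rw [hof 1]; exact ht _ ih

end BSAux
namespace BSAux

/-! ### The affine action of BS(2,3) on ℚ -/

def qA : Equiv.Perm ℚ where
  toFun x := x + 1
  invFun x := x - 1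
  left_inv x := by ring
  right_inv x := by ring

def qT : Equiv.Perm ℚ where
  toFun x := 3/2 * x
  invFun x := 2/3 * x
  left_inv x := by dsimp; ring
  right_inv x := by dsimp; ring

@[simp] lemma qA_apply (x : ℚ) : qA x = x + 1 := rfl
@[simp] lemma qT_apply (x : ℚ) : qT x = 3/2 * x := rfl
@[simp] lemma qA_inv_apply (x : ℚ) : qA⁻¹ x = x - 1 := rfl
@[simp] lemma qT_inv_apply (x : ℚ) : qT⁻¹ x = 2/3 * x := rfl

lemma ACTQ_check : ∀ r ∈ BSrels, FreeGroup.lift (fun i : Fin 2 => if i = 0 then qA else qT) r = 1 := by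
  rintro r hr
  simp only [BSrels, Set.mem_singleton_iff] at hr
  subst hr
  simp only [map_mul, map_inv, map_pow, FreeGroup.lift_apply_of]
  norm_num
  ext x
  simp [pow_succ, Equiv.Perm.mul_apply]
  ring

def ACTQ : BS23 →* Equiv.Perm ℚ := PresentedGroup.toGroup ACTQ_check

@[simp] lemma ACTQ_a : ACTQ BSa = qA := PresentedGroup.toGroup.of ACTQ_check
@[simp] lemma ACTQ_t : ACTQ BSt = qT := PresentedGroup.toGroup.of ACTQ_check

lemma qA_zpow (z : ℤ) (x : ℚ) : (qA ^ z) x = x + z := by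
  induction z using Int.induction_on generalizing x with
  | zero => simp
  | succ n ih =>
    rw [zpow_add_one, Equiv.Perm.mul_apply, qA_apply, ih]
    push_cast; ring
  | pred n ih =>
    rw [zpow_sub_one, Equiv.Perm.mul_apply, qA_inv_apply, ih]
    push_cast; ring

lemma ACTQ_apow (z : ℤ) (x : ℚ) : ACTQ (BSa ^ z) x = x + z := by
  rw [map_zpow, ACTQ_a, qA_zpow]

lemma qT_pow (n : ℕ) (x : ℚ) : (qT ^ n) x = (3/2)^n * x := by
  induction n generalizing x with
  | zero => simp
  | succ n ih => rw [pow_succ, Equiv.Perm.mul_apply, qT_apply, ih, pow_succ]; ring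

lemma qT_pow_inv (n : ℕ) (x : ℚ) : ((qT ^ n)⁻¹) x = (2/3)^n * x := by
  induction n generalizing x with
  | zero => simp
  | succ n ih =>
    rw [pow_succ, mul_inv_rev, Equiv.Perm.mul_apply, ih, qT_inv_apply, pow_succ]
    ring

/-! ### The labelled action on ℚ × M -/

variable {M : Type} [Group M]

def pA (M : Type) [Group M] : Equiv.Perm (ℚ × M) where
  toFun p := (p.1 + 1, p.2)
  invFun p := (p.1 - 1, p.2)
  left_inv p := by simp
  right_inv p := by simp

def pT (f : ℚ → M) : Equiv.Perm (ℚ × M) where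
  toFun p := (3/2 * p.1, f p.1 * p.2)
  invFun p := (2/3 * p.1, (f (2/3 * p.1))⁻¹ * p.2)
  left_inv p := by
    refine Prod.ext ?_ ?_ <;> dsimp
    · ring
    · rw [show (2:ℚ)/3 * (3/2 * p.1) = p.1 by ring, inv_mul_cancel_left]
  right_inv p := by
    refine Prod.ext ?_ ?_ <;> dsimp
    · ring
    · rw [mul_inv_cancel_left]

@[simp] lemma pA_apply (p : ℚ × M) : pA M p = (p.1 + 1, p.2) := rfl
@[simp] lemma pA_inv_apply (p : ℚ × M) : (pA M)⁻¹ p = (p.1 - 1, p.2) := rfl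
@[simp] lemma pT_apply (f : ℚ → M) (p : ℚ × M) : pT f p = (3/2 * p.1, f p.1 * p.2) := rfl
@[simp] lemma pT_inv_apply (f : ℚ → M) (p : ℚ × M) :
    (pT f)⁻¹ p = (2/3 * p.1, (f (2/3 * p.1))⁻¹ * p.2) := rfl

lemma pA_pow (n : ℕ) (p : ℚ × M) : ((pA M) ^ n) p = (p.1 + n, p.2) := by
  induction n generalizing p with
  | zero => simp
  | succ n ih =>
    rw [pow_succ, Equiv.Perm.mul_apply, pA_apply, ih]
    refine Prod.ext ?_ rfl
    push_cast; ring

lemma pA_zpow (z : ℤ) (p : ℚ × M) : ((pA M) ^ z) p = (p.1 + z, p.2) := by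
  induction z using Int.induction_on generalizing p with
  | zero => simp
  | succ n ih =>
    rw [zpow_add_one, Equiv.Perm.mul_apply, pA_apply, ih]
    refine Prod.ext ?_ rfl
    push_cast; ring
  | pred n ih =>
    rw [zpow_sub_one, Equiv.Perm.mul_apply, pA_inv_apply, ih]
    refine Prod.ext ?_ rfl
    push_cast; ring

lemma pT_rel {f : ℚ → M} (hf : ∀ x, f (x + 2) = f x) :
    pT f * (pA M) ^ 2 * (pT f)⁻¹ = (pA M) ^ 3 := by
  ext p
  all_goals
    rw [Equiv.Perm.mul_apply, Equiv.Perm.mul_apply, pT_inv_apply, pA_pow, pT_apply, pA_pow]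
  · dsimp; ring
  · dsimp
    rw [hf, mul_inv_cancel_left]

lemma ACT_check (f : ℚ → M) (hf : ∀ x, f (x + 2) = f x) :
    ∀ r ∈ BSrels,
      FreeGroup.lift (fun i : Fin 2 => if i = 0 then pA M else pT f) r = 1 := by
  rintro r hr
  simp only [BSrels, Set.mem_singleton_iff] at hr
  subst hr
  simp only [map_mul, map_inv, map_pow, FreeGroup.lift_apply_of,
    if_pos rfl, if_neg (show (1 : Fin 2) ≠ 0 by decide)]
  rw [mul_inv_eq_one]
  exact pT_rel hf

def ACT (f : ℚ → M) (hf : ∀ x, f (x + 2) = f x) : BS23 →* Equiv.Perm (ℚ × M) :=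
  PresentedGroup.toGroup (ACT_check f hf)

variable (f : ℚ → M) (hf : ∀ x, f (x + 2) = f x)

@[simp] lemma ACT_a : ACT f hf BSa = pA M := PresentedGroup.toGroup.of (ACT_check f hf)
@[simp] lemma ACT_t : ACT f hf BSt = pT f := PresentedGroup.toGroup.of (ACT_check f hf)

/-- first components agree with the affine action -/
lemma ACT_fst : ∀ (g : BS23) (p : ℚ × M), (ACT f hf g p).1 = ACTQ g (p.1) := by
  have key : ∀ g : BS23, ∀ p : ℚ × M, (ACT f hf g p).1 = ACTQ g (p.1) := by
    refine BS_induction ?_ ?_ ?_ ?_ ?_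
    · intro p; simp
    · intro g ih p
      rw [map_mul, map_mul, Equiv.Perm.mul_apply, Equiv.Perm.mul_apply]
      rw [ACT_a, ACTQ_a, ← ih p]
      rfl
    · intro g ih p
      rw [map_mul, map_mul, Equiv.Perm.mul_apply, Equiv.Perm.mul_apply,
        map_inv, map_inv, ACT_a, ACTQ_a, ← ih p]
      rfl
    · intro g ih p
      rw [map_mul, map_mul, Equiv.Perm.mul_apply, Equiv.Perm.mul_apply, ACT_t, ACTQ_t, ← ih p]
      rfl
    · intro g ih p
      rw [map_mul, map_mul, Equiv.Perm.mul_apply, Equiv.Perm.mul_apply,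
        map_inv, map_inv, ACT_t, ACTQ_t, ← ih p]
      rfl
  exact key

/-- the second component is a cocycle : it is left multiplication by the value at 1 -/
lemma ACT_snd : ∀ (g : BS23) (x : ℚ) (m : M),
    (ACT f hf g (x, m)).2 = (ACT f hf g (x, 1)).2 * m := by
  refine BS_induction ?_ ?_ ?_ ?_ ?_
  · intro x m; simp
  · intro g ih x m
    rw [map_mul, Equiv.Perm.mul_apply, Equiv.Perm.mul_apply, ACT_a]
    rcases h : ACT f hf g (x, m) with ⟨y, w⟩
    rcases h1 : ACT f hf g (x, 1) with ⟨y1, w1⟩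
    have : w = w1 * m := by
      have := ih x m; rw [h, h1] at this; exact this
    simp [this]
  · intro g ih x m
    rw [map_mul, Equiv.Perm.mul_apply, Equiv.Perm.mul_apply, map_inv, ACT_a]
    rcases h : ACT f hf g (x, m) with ⟨y, w⟩
    rcases h1 : ACT f hf g (x, 1) with ⟨y1, w1⟩
    have : w = w1 * m := by
      have := ih x m; rw [h, h1] at this; exact this
    simp [this]
  · intro g ih x m
    rw [map_mul, Equiv.Perm.mul_apply, Equiv.Perm.mul_apply, ACT_t]
    rcases h : ACT f hf g (x, m) with ⟨y, w⟩
    rcases h1 : ACT f hf g (x, 1) with ⟨y1, w1⟩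
    have hy : y = y1 := by
      have e1 := ACT_fst f hf g (x, m); have e2 := ACT_fst f hf g (x, 1)
      rw [h] at e1; rw [h1] at e2; dsimp at e1 e2; rw [e1, e2]
    have hw : w = w1 * m := by
      have := ih x m; rw [h, h1] at this; exact this
    simp [hy, hw, mul_assoc]
  · intro g ih x m
    rw [map_mul, Equiv.Perm.mul_apply, Equiv.Perm.mul_apply, map_inv, ACT_t]
    rcases h : ACT f hf g (x, m) with ⟨y, w⟩
    rcases h1 : ACT f hf g (x, 1) with ⟨y1, w1⟩
    have hy : y = y1 := by
      have e1 := ACT_fst f hf g (x, m); have e2 := ACT_fst f hf g (x, 1)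
      rw [h] at e1; rw [h1] at e2; dsimp at e1 e2; rw [e1, e2]
    have hw : w = w1 * m := by
      have := ih x m; rw [h, h1] at this; exact this
    simp [hy, hw, mul_assoc]

/-! ### The stabilizer subgroup -/

def StabN : Subgroup BS23 where
  carrier := {g | ACTQ g 0 = 0}
  one_mem' := by simp
  mul_mem' := by
    intro a b ha hb
    simp only [Set.mem_setOf_eq] at *
    rw [map_mul, Equiv.Perm.mul_apply, hb, ha]
  inv_mem' := by
    intro a ha
    simp only [Set.mem_setOf_eq] at *
    rw [map_inv]
    conv_lhs => rw [← ha]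
    simp

lemma mem_StabN {g : BS23} : g ∈ StabN ↔ ACTQ g 0 = 0 := Iff.rfl

/-- The homomorphism recording crossing words, on the stabilizer of `0`. -/
def Phi (f : ℚ → M) (hf : ∀ x, f (x + 2) = f x) : StabN →* M where
  toFun n := (ACT f hf n (0, 1)).2
  map_one' := by simp
  map_mul' a b := by
    dsimp
    rw [map_mul, Equiv.Perm.mul_apply]
    have hb1 : (ACT f hf b (0, 1)).1 = 0 := by
      rw [ACT_fst]; exact b.2
    rcases hb : ACT f hf (b : BS23) (0, 1) with ⟨y, w⟩
    rw [hb] at hb1; dsimp at hb1; subst hb1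
    rw [ACT_snd f hf a 0 w]

lemma Phi_apply (n : StabN) : Phi f hf n = (ACT f hf n (0, 1)).2 := rfl

end BSAux
namespace BSAux

/-! ### The subgroups `H_k = ⟨a^{5^k}, t⟩` and the membership characterisation -/

def Hk (k : ℕ) : Subgroup BS23 := Subgroup.closure {BSa ^ ((5:ℤ)^k), BSt}

lemma a5_mem (k : ℕ) : BSa ^ ((5:ℤ)^k) ∈ Hk k :=
  Subgroup.subset_closure (by left; rfl)

lemma t_mem (k : ℕ) : BSt ∈ Hk k :=
  Subgroup.subset_closure (by right; rfl)

lemma apow_mem {k : ℕ} {z : ℤ} (h : (5:ℤ)^k ∣ z) : BSa ^ z ∈ Hk k := by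
  obtain ⟨c, rfl⟩ := h
  rw [zpow_mul]
  exact zpow_mem (a5_mem k) c

/-- the set `5^k ℤ[1/6]` -/
def Lam (k : ℕ) : Set ℚ := {q : ℚ | ∃ (m : ℤ) (j : ℕ), q = 5^k * m / 6^j}

lemma Lam_zero_mem (k : ℕ) : (0:ℚ) ∈ Lam k := ⟨0, 0, by norm_num⟩

lemma Lam_add5 {k : ℕ} {q : ℚ} (h : q ∈ Lam k) : q + 5^k ∈ Lam k := by
  obtain ⟨m, j, rfl⟩ := h
  refine ⟨m + 6^j, j, ?_⟩
  have h6 : ((6:ℚ))^j ≠ 0 := by positivity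
  field_simp
  push_cast
  ring

lemma Lam_sub5 {k : ℕ} {q : ℚ} (h : q ∈ Lam k) : q - 5^k ∈ Lam k := by
  obtain ⟨m, j, rfl⟩ := h
  refine ⟨m - 6^j, j, ?_⟩
  have h6 : ((6:ℚ))^j ≠ 0 := by positivity
  field_simp
  push_cast
  ring

lemma Lam_neg {k : ℕ} {q : ℚ} (h : q ∈ Lam k) : -q ∈ Lam k := by
  obtain ⟨m, j, rfl⟩ := h
  exact ⟨-m, j, by push_cast; ring⟩

lemma Lam_mul32 {k : ℕ} {q : ℚ} (h : q ∈ Lam k) : 3/2 * q ∈ Lam k := by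
  obtain ⟨m, j, rfl⟩ := h
  refine ⟨9 * m, j + 1, ?_⟩
  have h6 : ((6:ℚ))^j ≠ 0 := by positivity
  rw [pow_succ]
  field_simp
  push_cast
  ring

lemma Lam_mul23 {k : ℕ} {q : ℚ} (h : q ∈ Lam k) : 2/3 * q ∈ Lam k := by
  obtain ⟨m, j, rfl⟩ := h
  refine ⟨4 * m, j + 1, ?_⟩
  have h6 : ((6:ℚ))^j ≠ 0 := by positivity
  rw [pow_succ]
  field_simp
  push_cast
  ring

lemma Lam_inv {k : ℕ} {h : BS23} (hh : h ∈ Hk k) :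
    ∀ x : ℚ, x ∈ Lam k ↔ ACTQ h x ∈ Lam k := by
  refine Subgroup.closure_induction ?_ ?_ ?_ ?_ hh
  · rintro y (rfl | rfl)
    · intro x
      rw [ACTQ_apow]
      constructor
      · intro hx
        push_cast
        exact Lam_add5 hx
      · intro hx
        have := Lam_sub5 hx
        push_cast at this ⊢
        simpa using this
    · intro x
      rw [ACTQ_t, qT_apply]
      constructor
      · exact Lam_mul32
      · intro hx
        have := Lam_mul23 hx
        rw [show (2:ℚ)/3 * (3/2 * x) = x by ring] at this
        exact this
  · intro x
    rw [map_one]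
    rfl
  · intro y z _ _ ihy ihz x
    rw [map_mul, Equiv.Perm.mul_apply]
    exact (ihz x).trans (ihy _)
  · intro y _ ihy x
    have hyx : ACTQ y (ACTQ y⁻¹ x) = x := by
      rw [map_inv]; simp
    have := ihy (ACTQ y⁻¹ x)
    rw [hyx] at this
    exact this.symm

/-- every element lies in some coset `a^j · H_k` -/
lemma coset_decomp (k : ℕ) : ∀ g : BS23, ∃ (j : ℤ) (h : BS23), h ∈ Hk k ∧ g = BSa ^ j * h := by
  have h24 : (24:ℤ) ∣ 25^k - 1 := by
    have := sub_dvd_pow_sub_pow (25:ℤ) 1 k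
    simpa using this
  obtain ⟨u, hu⟩ := h24
  refine BS_induction ?_ ?_ ?_ ?_ ?_
  · exact ⟨0, 1, one_mem _, by simp⟩
  · rintro g ⟨j, h, hh, rfl⟩
    exact ⟨j + 1, h, hh, by rw [zpow_add_one]; group⟩
  · rintro g ⟨j, h, hh, rfl⟩
    exact ⟨j - 1, h, hh, by rw [zpow_sub_one]; group⟩
  · rintro g ⟨j, h, hh, rfl⟩
    refine ⟨3 * (-12 * j * u), BSt * (BSa ^ (j * 25^k) * h),
      mul_mem (t_mem k) (mul_mem (apow_mem ⟨5^k * j, by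
        rw [show (25:ℤ) = 5^2 by norm_num, ← pow_mul, two_mul, pow_add]; ring⟩) hh), ?_⟩
    have hsplit : (j : ℤ) = 2 * (-12 * j * u) + j * 25^k := by
      have : (25:ℤ)^k = 24 * u + 1 := by linarith
      rw [this]; ring
    calc BSt * (BSa ^ j * h) = (BSt * BSa ^ (2 * (-12 * j * u))) * (BSa ^ (j * 25^k) * h) := by
          rw [show BSa ^ (j:ℤ) = BSa ^ (2 * (-12 * j * u)) * BSa ^ (j * 25^k) by
            rw [← zpow_add]; rw [← hsplit]]
          group
      _ = BSa ^ (3 * (-12 * j * u)) * (BSt * (BSa ^ (j * 25^k) * h)) := by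
          rw [t_mul_pow]; group
  · rintro g ⟨j, h, hh, rfl⟩
    refine ⟨2 * (-8 * j * u), BSt⁻¹ * (BSa ^ (j * 25^k) * h),
      mul_mem (inv_mem (t_mem k)) (mul_mem (apow_mem ⟨5^k * j, by
        rw [show (25:ℤ) = 5^2 by norm_num, ← pow_mul, two_mul, pow_add]; ring⟩) hh), ?_⟩
    have hsplit : (j : ℤ) = 3 * (-8 * j * u) + j * 25^k := by
      have : (25:ℤ)^k = 24 * u + 1 := by linarith
      rw [this]; ring
    calc BSt⁻¹ * (BSa ^ j * h)
        = (BSt⁻¹ * BSa ^ (3 * (-8 * j * u))) * (BSa ^ (j * 25^k) * h) := by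
          rw [show BSa ^ (j:ℤ) = BSa ^ (3 * (-8 * j * u)) * BSa ^ (j * 25^k) by
            rw [← zpow_add]; rw [← hsplit]]
          group
      _ = BSa ^ (2 * (-8 * j * u)) * (BSt⁻¹ * (BSa ^ (j * 25^k) * h)) := by
          rw [tinv_mul_pow]; group

lemma coprime_5pow_6pow (k i : ℕ) : IsCoprime ((5:ℤ)^k) ((6:ℤ)^i) := by
  refine IsCoprime.pow ?_
  rw [Int.isCoprime_iff_gcd_eq_one]
  norm_num

lemma mem_Hk_of_stab {k : ℕ} {g : BS23} (hg : ACTQ g 0 = 0) : g ∈ Hk k := by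
  obtain ⟨j, h, hh, rfl⟩ := coset_decomp k g
  have hpos : ACTQ (BSa ^ j * h) 0 = ACTQ h 0 + j := by
    rw [map_mul, Equiv.Perm.mul_apply, ACTQ_apow]
  have hLam : ACTQ h 0 ∈ Lam k := (Lam_inv hh 0).1 (Lam_zero_mem k)
  have hj : ((j:ℚ)) ∈ Lam k := by
    have : (j:ℚ) = -(ACTQ h 0) := by rw [hpos] at hg; linarith
    rw [this]
    exact Lam_neg hLam
  obtain ⟨m, i, hmi⟩ := hj
  have hint : (j:ℤ) * 6^i = 5^k * m := by
    have h6 : ((6:ℚ))^i ≠ 0 := by positivity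
    have : (j:ℚ) * 6^i = 5^k * m := by rw [hmi]; field_simp
    exact_mod_cast this
  have hdvd : (5:ℤ)^k ∣ j := by
    refine (coprime_5pow_6pow k i).dvd_of_dvd_mul_right ?_
    exact ⟨m, hint⟩
  exact mul_mem (apow_mem hdvd) hh

/-! ### Ranges of the iterates of θ -/

lemma top_gen : Subgroup.closure ({BSa, BSt} : Set BS23) = ⊤ := by
  rw [eq_top_iff, ← PresentedGroup.closure_range_of BSrels]
  apply Subgroup.closure_mono
  rintro _ ⟨i, rfl⟩
  match i with
  | 0 => left; rfl
  | 1 => right; rfl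

section theta

variable (θ : BS23 →* BS23)

lemma iter_a (hθa : θ BSa = BSa ^ (-5 : ℤ)) (k : ℕ) :
    iterHom θ k BSa = BSa ^ ((-5:ℤ)^k) := by
  induction k with
  | zero => simp [iterHom]
  | succ k ih =>
    show (iterHom θ k).comp θ BSa = _
    rw [MonoidHom.comp_apply, hθa, map_zpow, ih, ← zpow_mul, ← pow_succ]

lemma iter_t (hθt : θ BSt = BSt) (k : ℕ) : iterHom θ k BSt = BSt := by
  induction k with
  | zero => simp [iterHom]
  | succ k ih =>
    show (iterHom θ k).comp θ BSt = _
    rw [MonoidHom.comp_apply, hθt, ih]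

lemma closure_pair_inv {G : Type*} [Group G] (x t : G) :
    Subgroup.closure {x⁻¹, t} = Subgroup.closure {x, t} := by
  apply le_antisymm
  · rw [Subgroup.closure_le]
    rintro y (rfl | rfl)
    · exact inv_mem (Subgroup.subset_closure (by left; rfl))
    · exact Subgroup.subset_closure (by right; rfl)
  · rw [Subgroup.closure_le]
    rintro y (rfl | rfl)
    · have h1 : y⁻¹ ∈ Subgroup.closure ({y⁻¹, t} : Set G) :=
        Subgroup.subset_closure (Set.mem_insert _ _)
      simpa using inv_mem h1
    · exact Subgroup.subset_closure (Set.mem_insert_of_mem _ rfl)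

lemma range_iter (hθa : θ BSa = BSa ^ (-5 : ℤ)) (hθt : θ BSt = BSt) (k : ℕ) :
    (iterHom θ k).range = Hk k := by
  rw [MonoidHom.range_eq_map, ← top_gen, MonoidHom.map_closure, Set.image_pair,
    iter_a θ hθa, iter_t θ hθt]
  rcases Nat.even_or_odd k with he | ho
  · rw [he.neg_pow]
    rfl
  · rw [ho.neg_pow, zpow_neg]
    exact closure_pair_inv _ _

end theta

lemma Lam_forall_zero {q : ℚ} (hq : ∀ k : ℕ, q ∈ Lam (k+1)) : q = 0 := by
  by_contra hne
  set K : ℕ := q.num.natAbs + 1 with hK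
  obtain ⟨m, i, hmi⟩ := hq q.num.natAbs
  have hnum : q.num ≠ 0 := Rat.num_ne_zero.2 hne
  have hint : q.num * 6^i = 5^K * (m * q.den) := by
    have h6 : ((6:ℚ))^i ≠ 0 := by positivity
    have hden : ((q.den:ℚ)) ≠ 0 := by
      exact_mod_cast (Nat.cast_ne_zero (R := ℚ)).2 q.den_nz
    have hq' : (q.num : ℚ) = q * q.den := (div_eq_iff hden).1 (Rat.num_div_den q)
    have : (q.num : ℚ) * 6^i = 5^K * (m * q.den) := by
      rw [hq', hmi]; field_simp; ring
    exact_mod_cast this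
  have hdvd : (5:ℤ)^K ∣ q.num :=
    (coprime_5pow_6pow K i).dvd_of_dvd_mul_right ⟨m * q.den, hint⟩
  have hdvd' : 5^K ∣ q.num.natAbs := by
    have h1 := Int.natAbs_dvd_natAbs.2 hdvd
    rwa [Int.natAbs_pow] at h1
  have hle : 5^K ≤ q.num.natAbs := Nat.le_of_dvd (Int.natAbs_pos.2 hnum) hdvd'
  have hlt : q.num.natAbs < 5^K := by
    calc q.num.natAbs < 5^(q.num.natAbs) := Nat.lt_pow_self (by norm_num)
      _ ≤ 5^K := Nat.pow_le_pow_right (by norm_num) (by omega)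
  omega

/-- the main membership characterisation -/
lemma iInf_eq_StabN (hθa : θ BSa = BSa ^ (-5 : ℤ)) (hθt : θ BSt = BSt) :
    (⨅ k : ℕ, (iterHom θ (k + 1)).range) = StabN := by
  ext g
  rw [Subgroup.mem_iInf]
  constructor
  · intro h
    have hLam : ∀ k : ℕ, ACTQ g 0 ∈ Lam (k+1) := by
      intro k
      have hg : g ∈ Hk (k+1) := by
        rw [← range_iter θ hθa hθt]
        exact h k
      exact (Lam_inv hg 0).1 (Lam_zero_mem _)
    exact Lam_forall_zero hLam
  · intro hg k
    rw [range_iter θ hθa hθt]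
    exact mem_Hk_of_stab hg

end BSAux
namespace BSAux

/-! ### Reduced words in BS(2,3) -/

abbrev Syl := Bool × ℤ

def evalT : List Syl → BS23
  | [] => 1
  | (e, m) :: L => (if e then BSt else BSt⁻¹) * BSa ^ m * evalT L

def pinchFree : Syl → Syl → Prop
  | (e, m), (e', _) =>
      (e = true → e' = false → ¬((2:ℤ) ∣ m)) ∧ (e = false → e' = true → ¬((3:ℤ) ∣ m))

def RedW (L : List Syl) : Prop := List.Chain' pinchFree L

lemma evalT_nil : evalT [] = 1 := rfl

lemma evalT_cons_t (m : ℤ) (L : List Syl) :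
    evalT ((true, m) :: L) = BSt * BSa ^ m * evalT L := by
  simp [evalT]

lemma evalT_cons_f (m : ℤ) (L : List Syl) :
    evalT ((false, m) :: L) = BSt⁻¹ * BSa ^ m * evalT L := by
  simp [evalT]

lemma RedW_tail {s : Syl} {L : List Syl} (h : RedW (s :: L)) : RedW L := h.tail

/-- every element of BS(2,3) admits a reduced expression -/
lemma exists_red : ∀ g : BS23, ∃ (m0 : ℤ) (L : List Syl), RedW L ∧ g = BSa ^ m0 * evalT L := by
  refine BS_induction ?_ ?_ ?_ ?_ ?_
  · exact ⟨0, [], List.isChain_nil, by simp [evalT]⟩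
  · rintro g ⟨m0, L, hred, rfl⟩
    exact ⟨m0 + 1, L, hred, by rw [zpow_add_one]; group⟩
  · rintro g ⟨m0, L, hred, rfl⟩
    exact ⟨m0 - 1, L, hred, by rw [zpow_sub_one]; group⟩
  · rintro g ⟨m0, L, hred, rfl⟩
    match L, hred with
    | [], _ =>
      refine ⟨0, [(true, m0)], List.isChain_singleton _, ?_⟩
      rw [evalT_cons_t, evalT_nil]
      group
    | (e', m') :: L', hred =>
      by_cases hc : e' = false ∧ (2:ℤ) ∣ m0
      · obtain ⟨rfl, c, rfl⟩ := hc
        refine ⟨3 * c + m', L', RedW_tail hred, ?_⟩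
        have : BSt * (BSa ^ (2*c) * evalT ((false, m') :: L'))
            = BSa ^ (3*c+m') * evalT L' := by
          rw [evalT_cons_f]
          calc BSt * (BSa ^ (2*c) * (BSt⁻¹ * BSa ^ m' * evalT L'))
              = (BSt * BSa ^ (2*c)) * BSt⁻¹ * BSa ^ m' * evalT L' := by group
            _ = (BSa ^ (3*c) * BSt) * BSt⁻¹ * BSa ^ m' * evalT L' := by rw [t_mul_pow]
            _ = BSa ^ (3*c) * BSa ^ m' * evalT L' := by group
            _ = BSa ^ (3*c+m') * evalT L' := by rw [zpow_add]
        exact this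
      · refine ⟨0, (true, m0) :: (e', m') :: L', ?_, ?_⟩
        · refine List.IsChain.cons_cons ?_ hred
          constructor
          · intro _ he'
            intro hdvd
            exact hc ⟨he', hdvd⟩
          · intro h; exact absurd h (by simp)
        · rw [evalT_cons_t]
          group
  · rintro g ⟨m0, L, hred, rfl⟩
    match L, hred with
    | [], _ =>
      refine ⟨0, [(false, m0)], List.isChain_singleton _, ?_⟩
      rw [evalT_cons_f, evalT_nil]
      group
    | (e', m') :: L', hred =>
      by_cases hc : e' = true ∧ (3:ℤ) ∣ m0
      · obtain ⟨rfl, c, rfl⟩ := hc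
        refine ⟨2 * c + m', L', RedW_tail hred, ?_⟩
        have : BSt⁻¹ * (BSa ^ (3*c) * evalT ((true, m') :: L'))
            = BSa ^ (2*c+m') * evalT L' := by
          rw [evalT_cons_t]
          calc BSt⁻¹ * (BSa ^ (3*c) * (BSt * BSa ^ m' * evalT L'))
              = (BSt⁻¹ * BSa ^ (3*c)) * BSt * BSa ^ m' * evalT L' := by group
            _ = (BSa ^ (2*c) * BSt⁻¹) * BSt * BSa ^ m' * evalT L' := by rw [tinv_mul_pow]
            _ = BSa ^ (2*c) * BSa ^ m' * evalT L' := by group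
            _ = BSa ^ (2*c+m') * evalT L' := by rw [zpow_add]
        exact this
      · refine ⟨0, (false, m0) :: (e', m') :: L', ?_, ?_⟩
        · refine List.IsChain.cons_cons ?_ hred
          constructor
          · intro h; exact absurd h (by simp)
          · intro _ he'
            intro hdvd
            exact hc ⟨he', hdvd⟩
        · rw [evalT_cons_f]
          group

/-! ### The crossing word of a reduced expression -/

def posL : List Syl → ℚ → ℚ
  | [], x => x
  | (e, m) :: L, x => (if e then (3/2:ℚ) else 2/3) * (posL L x + m)

lemma posL_nil (x : ℚ) : posL [] x = x := rfl

lemma posL_cons_t (m : ℤ) (L : List Syl) (x : ℚ) :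
    posL ((true, m) :: L) x = 3/2 * (posL L x + m) := by simp [posL]

lemma posL_cons_f (m : ℤ) (L : List Syl) (x : ℚ) :
    posL ((false, m) :: L) x = 2/3 * (posL L x + m) := by simp [posL]

def letsL : List Syl → ℚ → List (ℚ × Bool)
  | [], _ => []
  | (e, m) :: L, x =>
      (if e then (rep2 (posL L x + m), true) else (rep2 (2/3 * (posL L x + m)), false))
        :: letsL L x

lemma letsL_nil (x : ℚ) : letsL [] x = [] := rfl

lemma letsL_cons_t (m : ℤ) (L : List Syl) (x : ℚ) :
    letsL ((true, m) :: L) x = (rep2 (posL L x + m), true) :: letsL L x := by simp [letsL]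

lemma letsL_cons_f (m : ℤ) (L : List Syl) (x : ℚ) :
    letsL ((false, m) :: L) x = (rep2 (2/3 * (posL L x + m)), false) :: letsL L x := by
  simp [letsL]

def fF : ℚ → FreeGroup ℚ := fun q => FreeGroup.of (rep2 q)

lemma hfF : ∀ x : ℚ, fF (x + 2) = fF x := fun x => by
  simp only [fF, rep2_add_two]

lemma of_mul_mk {q : ℚ} {L : List (ℚ × Bool)} :
    FreeGroup.of q * FreeGroup.mk L = FreeGroup.mk ((q, true) :: L) := by
  rw [show FreeGroup.of q = FreeGroup.mk [(q, true)] from rfl, FreeGroup.mul_mk]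
  rfl

lemma ofinv_mul_mk {q : ℚ} {L : List (ℚ × Bool)} :
    (FreeGroup.of q)⁻¹ * FreeGroup.mk L = FreeGroup.mk ((q, false) :: L) := by
  have : (FreeGroup.of q)⁻¹ = FreeGroup.mk [(q, false)] := by
    rw [show FreeGroup.of q = FreeGroup.mk [(q, true)] from rfl, FreeGroup.inv_mk]
    rfl
  rw [this, FreeGroup.mul_mk]
  rfl

lemma ACT_evalT (L : List Syl) (x : ℚ) :
    ACT fF hfF (evalT L) (x, 1) = (posL L x, FreeGroup.mk (letsL L x)) := by
  induction L with
  | nil =>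
    rw [evalT_nil, posL_nil, letsL_nil, map_one, ← FreeGroup.one_eq_mk]
    rfl
  | cons s L ih =>
    rcases s with ⟨e, m⟩
    cases e
    · rw [evalT_cons_f, posL_cons_f, letsL_cons_f, map_mul, map_mul,
        Equiv.Perm.mul_apply, Equiv.Perm.mul_apply, ih, map_zpow, ACT_a, pA_zpow,
        map_inv, ACT_t]
      dsimp only
      rw [pT_inv_apply]
      dsimp only
      rw [show fF (2/3 * (posL L x + m)) = FreeGroup.of (rep2 (2/3 * (posL L x + m))) from rfl,
        ofinv_mul_mk]
    · rw [evalT_cons_t, posL_cons_t, letsL_cons_t, map_mul, map_mul,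
        Equiv.Perm.mul_apply, Equiv.Perm.mul_apply, ih, map_zpow, ACT_a, pA_zpow, ACT_t]
      dsimp only
      rw [pT_apply]
      dsimp only
      rw [show fF (posL L x + m) = FreeGroup.of (rep2 (posL L x + m)) from rfl, of_mul_mk]

/-- no-cancellation condition for words in the free group -/
def NC (a b : ℚ × Bool) : Prop := ¬(a.1 = b.1 ∧ a.2 = !b.2)

lemma TwoZ_int {m : ℤ} (h : TwoZ (m : ℚ)) : (2:ℤ) ∣ m := by
  obtain ⟨k, hk⟩ := h
  exact ⟨k, by exact_mod_cast hk⟩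

lemma letsL_reduced {L : List Syl} (hred : RedW L) (x : ℚ) :
    List.Chain' NC (letsL L x) := by
  induction L with
  | nil => exact List.isChain_nil
  | cons s L ih =>
    rcases s with ⟨e, m⟩
    have htail : List.Chain' NC (letsL L x) := ih (RedW_tail hred)
    have hstep : ∀ p : ℚ × Bool, letsL ((e, m) :: L) x = p :: letsL L x →
        (∀ y ∈ (letsL L x).head?, NC p y) → List.Chain' NC (letsL ((e,m)::L) x) := by
      intro p hp hhd
      rw [hp]
      exact List.isChain_cons.2 ⟨hhd, htail⟩
    match L, hred with
    | [], _ =>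
      cases e
      · refine hstep _ (letsL_cons_f m [] x) ?_
        intro y hy
        rw [letsL_nil] at hy
        simp at hy
      · refine hstep _ (letsL_cons_t m [] x) ?_
        intro y hy
        rw [letsL_nil] at hy
        simp at hy
    | (e', m') :: L'', hred =>
      have hpinch : pinchFree (e, m) (e', m') := (List.isChain_cons_cons.1 hred).1
      cases e <;> cases e'
      · refine hstep _ (letsL_cons_f m _ x) ?_
        intro y hy
        rw [letsL_cons_f, List.head?_cons, Option.mem_some_iff] at hy
        subst hy
        simp [NC]
      · -- new letter sign false, head sign true : pinch condition is 3 ∤ m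
        refine hstep _ (letsL_cons_f m _ x) ?_
        intro y hy
        rw [letsL_cons_t, List.head?_cons, Option.mem_some_iff] at hy
        subst hy
        rintro ⟨hcl, -⟩
        have h3 : ¬ ((3:ℤ) ∣ m) := hpinch.2 rfl rfl
        apply h3
        rw [posL_cons_t] at hcl
        dsimp only at hcl
        obtain ⟨k, hk⟩ := rep2_eq_iff.1 hcl
        refine ⟨k, ?_⟩
        have : (m : ℚ) = 3 * k := by
          have harg : 2/3 * (3/2 * (posL L'' x + m') + m) - (posL L'' x + m')
              = 2/3 * m := by ring
          rw [harg] at hk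
          linarith
        exact_mod_cast this
      · -- new letter sign true, head sign false : pinch condition is 2 ∤ m
        refine hstep _ (letsL_cons_t m _ x) ?_
        intro y hy
        rw [letsL_cons_f, List.head?_cons, Option.mem_some_iff] at hy
        subst hy
        rintro ⟨hcl, -⟩
        have h2 : ¬ ((2:ℤ) ∣ m) := hpinch.1 rfl rfl
        apply h2
        rw [posL_cons_f] at hcl
        dsimp only at hcl
        obtain ⟨k, hk⟩ := rep2_eq_iff.1 hcl
        refine TwoZ_int ⟨k, ?_⟩
        linarith
      · refine hstep _ (letsL_cons_t m _ x) ?_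
        intro y hy
        rw [letsL_cons_t, List.head?_cons, Option.mem_some_iff] at hy
        subst hy
        simp [NC]

lemma reduce_eq_self {L : List (ℚ × Bool)} (h : List.Chain' NC L) :
    FreeGroup.reduce L = L := by
  induction L with
  | nil => rfl
  | cons x L ih =>
    have hL : FreeGroup.reduce L = L := ih h.tail
    rw [FreeGroup.reduce.cons, hL]
    match L, h with
    | [], _ => rfl
    | hd :: tl, h =>
      have hnc : NC x hd := (List.isChain_cons_cons.1 h).1
      simp only
      rw [if_neg hnc]

lemma mk_ne_one {L : List (ℚ × Bool)} (hne : L ≠ []) (h : List.Chain' NC L) :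
    FreeGroup.mk L ≠ 1 := by
  intro h1
  have : (FreeGroup.mk L).toWord = [] := FreeGroup.toWord_eq_nil_iff.2 h1
  rw [FreeGroup.toWord_mk, reduce_eq_self h] at this
  exact hne this

/-! ### Injectivity of Φ -/

lemma Phi_F_inj : Function.Injective (Phi fF hfF) := by
  rw [injective_iff_map_eq_one]
  rintro ⟨n, hn⟩ h1
  rw [Phi_apply] at h1
  dsimp only at h1
  obtain ⟨m0, L, hred, rfl⟩ := exists_red n
  have hsnd : (ACT fF hfF (BSa ^ m0 * evalT L) (0, 1)).2 = FreeGroup.mk (letsL L 0) := by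
    rw [map_mul, Equiv.Perm.mul_apply, ACT_evalT, map_zpow, ACT_a, pA_zpow]
  rw [hsnd] at h1
  match L, hred, hn with
  | (s :: L'), hred, hn =>
    have hne : letsL (s :: L') 0 ≠ [] := by
      rcases s with ⟨e, m⟩
      cases e
      · rw [letsL_cons_f]; exact List.cons_ne_nil _ _
      · rw [letsL_cons_t]; exact List.cons_ne_nil _ _
    exact absurd h1 (mk_ne_one hne (letsL_reduced hred 0))
  | [], _, hn =>
    have hm0 : ACTQ (BSa ^ m0 * evalT []) 0 = (m0 : ℚ) := by
      rw [evalT_nil, mul_one, ACTQ_apow, zero_add]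
    have : (m0 : ℚ) = 0 := by
      rw [← hm0]
      exact hn
    have hm00 : m0 = 0 := by exact_mod_cast this
    subst hm00
    refine Subtype.ext ?_
    show BSa ^ (0:ℤ) * evalT [] = 1
    rw [evalT_nil, mul_one, zpow_zero]

/-! ### Freeness -/

lemma exists_free : ∃ ι : Type, Nonempty (↥StabN ≃* FreeGroup ι) := by
  obtain ⟨ι, ⟨b⟩⟩ := (subgroupIsFreeOfIsFree (Phi fF hfF).range).nonempty_basis
  exact ⟨ι, ⟨(MonoidHom.ofInjective Phi_F_inj).trans b.repr⟩⟩

end BSAux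
namespace BSAux

/-! ### Functoriality of Φ -/

variable {M M' : Type} [Group M] [Group M']

lemma ACT_map (F : M →* M') (f : ℚ → M) (hf : ∀ x, f (x + 2) = f x)
    (f' : ℚ → M') (hf' : ∀ x, f' (x + 2) = f' x) (hcomp : ∀ q, f' q = F (f q)) :
    ∀ (g : BS23) (p : ℚ × M),
      ACT f' hf' g (p.1, F p.2) = ((ACT f hf g p).1, F ((ACT f hf g p).2)) := by
  refine BS_induction ?_ ?_ ?_ ?_ ?_
  · intro p; simp
  · intro g ih p
    rw [map_mul, map_mul, Equiv.Perm.mul_apply, Equiv.Perm.mul_apply, ih p, ACT_a, ACT_a]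
    rfl
  · intro g ih p
    rw [map_mul, map_mul, Equiv.Perm.mul_apply, Equiv.Perm.mul_apply, ih p,
      map_inv, map_inv, ACT_a, ACT_a]
    rfl
  · intro g ih p
    rw [map_mul, map_mul, Equiv.Perm.mul_apply, Equiv.Perm.mul_apply, ih p, ACT_t, ACT_t]
    rcases h : ACT f hf g p with ⟨y, w⟩
    dsimp only
    rw [pT_apply, pT_apply]
    dsimp only
    rw [hcomp, map_mul]
  · intro g ih p
    rw [map_mul, map_mul, Equiv.Perm.mul_apply, Equiv.Perm.mul_apply, ih p,
      map_inv, map_inv, ACT_t, ACT_t]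
    rcases h : ACT f hf g p with ⟨y, w⟩
    dsimp only
    rw [pT_inv_apply, pT_inv_apply]
    dsimp only
    rw [hcomp, map_mul, map_inv]

lemma Phi_map' (F : M →* M') (f : ℚ → M) (hf : ∀ x, f (x + 2) = f x)
    (f' : ℚ → M') (hf' : ∀ x, f' (x + 2) = f' x) (hcomp : ∀ q, f' q = F (f q)) (s : StabN) :
    Phi f' hf' s = F (Phi f hf s) := by
  rw [Phi_apply, Phi_apply]
  have h := ACT_map F f hf f' hf' hcomp s (0, 1)
  rw [map_one] at h
  have h2 := congrArg Prod.snd h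
  dsimp only at h2 ⊢
  exact h2

/-! ### Values on powers of t -/

variable (δ : ℚ → ℤ) (hδ : ∀ x, δ (x + 2) = δ x)

def fI (δ : ℚ → ℤ) : ℚ → Multiplicative ℤ := fun q => ofAdd (δ q)

lemma hfI (δ : ℚ → ℤ) (hδ : ∀ x, δ (x + 2) = δ x) : ∀ x, fI δ (x + 2) = fI δ x :=
  fun x => by simp [fI, hδ x]

lemma ACT_tpow (k : ℕ) (x : ℚ) (w : Multiplicative ℤ) :
    ACT (fI δ) (hfI δ hδ) (BSt ^ k) (x, w)
      = ((3/2)^k * x, ofAdd (∑ i ∈ Finset.range k, δ ((3/2)^i * x)) * w) := by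
  induction k generalizing x w with
  | zero => simp
  | succ k ih =>
    rw [pow_succ, map_mul, Equiv.Perm.mul_apply, ACT_t, pT_apply]
    dsimp only
    rw [show fI δ x * w = ofAdd (δ x) * w from rfl, ih]
    have hsum : (∑ i ∈ Finset.range k, δ ((3/2)^i * (3/2 * x))) + δ x
        = ∑ i ∈ Finset.range (k+1), δ ((3/2)^i * x) := by
      rw [Finset.sum_range_succ']
      congr 1
      · apply Finset.sum_congr rfl
        intro i _
        congr 1
        rw [pow_succ]
        ring
      · simp
    refine Prod.ext ?_ ?_ <;> dsimp only
    · ring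
    · rw [← mul_assoc, ← ofAdd_add, hsum]

lemma ACT_tpow_inv (k : ℕ) (x : ℚ) (w : Multiplicative ℤ) :
    ACT (fI δ) (hfI δ hδ) ((BSt ^ k)⁻¹) (x, w)
      = ((2/3)^k * x, ofAdd (-∑ i ∈ Finset.range k, δ ((2/3)^(i+1) * x)) * w) := by
  induction k generalizing x w with
  | zero => simp
  | succ k ih =>
    rw [pow_succ, mul_inv_rev, map_mul, Equiv.Perm.mul_apply, ih, map_inv, ACT_t, pT_inv_apply]
    dsimp only
    have harg : (2:ℚ)/3 * ((2/3)^k * x) = (2/3)^(k+1) * x := by rw [pow_succ]; ring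
    have hlet : (fI δ (2/3 * ((2/3)^k * x)))⁻¹ = ofAdd (-δ ((2/3)^(k+1) * x)) := by
      rw [harg]; rfl
    have hsum : -δ ((2/3)^(k+1) * x) + -∑ i ∈ Finset.range k, δ ((2/3)^(i+1) * x)
        = -∑ i ∈ Finset.range (k+1), δ ((2/3)^(i+1) * x) := by
      rw [Finset.sum_range_succ]
      ring
    refine Prod.ext ?_ ?_ <;> dsimp only
    · rw [pow_succ]; ring
    · rw [hlet, ← mul_assoc, ← ofAdd_add, hsum]

lemma ACT_apow (f : ℚ → M) (hf : ∀ x, f (x + 2) = f x) (z : ℤ) (p : ℚ × M) :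
    ACT f hf (BSa ^ z) p = (p.1 + z, p.2) := by
  rw [map_zpow, ACT_a, pA_zpow]

end BSAux
namespace BSAux

/-! ### Arithmetic of crossing classes -/

lemma not_dvd_helper {nn : ℤ} (e f : ℕ) (h : ¬ (2:ℤ) ∣ nn) :
    ¬ ((2:ℤ)^(e+1) * 3^f ∣ nn) :=
  fun hd => h (dvd_trans (dvd_mul_of_dvd_left (dvd_pow_self 2 e.succ_ne_zero) _) hd)

lemma odd3pow (s : ℕ) : ¬ (2:ℤ) ∣ 3^s := by
  obtain ⟨m, hm⟩ := (Odd.pow (by decide : Odd (3:ℤ)) : Odd ((3:ℤ)^s))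
  rintro ⟨c, hc⟩
  omega

lemma term1_ne (i jj : ℕ) :
    rep2 ((3/2:ℚ)^i * (-1)) ≠ rep2 (-(3/2:ℚ)^(i+(jj+1))) := by
  apply rep2_ne (n := 3^(i+(jj+1)) - 3^i * 2^(jj+1)) (e := i+(jj+1)) (f := 0)
  · push_cast
    simp only [div_pow]
    field_simp
    ring
  · apply not_dvd_helper
    intro h2
    apply odd3pow (i+(jj+1))
    have hX : (2:ℤ) ∣ 3^i * 2^(jj+1) := ⟨3^i * 2^jj, by ring⟩
    obtain ⟨c1, hc1⟩ := h2
    obtain ⟨c2, hc2⟩ := hX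
    exact ⟨c1 + c2, by omega⟩

lemma term4_ne (n i : ℕ) :
    rep2 ((2/3:ℚ)^(i+1) * 0) ≠ rep2 (-(3/2:ℚ)^n) := by
  apply rep2_ne (n := 3^n) (e := n) (f := 0)
  · push_cast
    simp only [div_pow]
    field_simp
    ring
  · exact not_dvd_helper _ _ (odd3pow n)

lemma term3_ne (i jj : ℕ) :
    rep2 ((3/2:ℚ)^i * (-(2/3:ℚ)^((i+jj)+1))) ≠ rep2 (-(3/2:ℚ)^(i+jj)) := by
  apply rep2_ne (n := 3^(2*(i+jj)+1) - 3^i * 2^(i+2*jj+1)) (e := i+jj) (f := (i+jj)+1)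
  · push_cast
    simp only [div_pow]
    field_simp
    ring
  · apply not_dvd_helper
    intro h2
    apply odd3pow (2*(i+jj)+1)
    have hX : (2:ℤ) ∣ 3^i * 2^(i+2*jj+1) := ⟨3^i * 2^(i+2*jj), by rw [pow_succ]; ring⟩
    obtain ⟨c1, hc1⟩ := h2
    obtain ⟨c2, hc2⟩ := hX
    exact ⟨c1 + c2, by omega⟩

lemma term2_ne_zero (n : ℕ) :
    rep2 ((2/3:ℚ)^(0+1) * ((3/2:ℚ)^(n+1) * (-1) - 1)) ≠ rep2 (-(3/2:ℚ)^n) := by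
  apply rep2_ne (n := -2) (e := 0) (f := 1)
  · push_cast
    rw [pow_succ]
    field_simp
    ring
  · decide

lemma term2_ne_succ (i' jj : ℕ) :
    rep2 ((2/3:ℚ)^((i'+1)+1) * ((3/2:ℚ)^(((i'+1)+jj)+1) * (-1) - 1))
      ≠ rep2 (-(3/2:ℚ)^((i'+1)+jj)) := by
  apply rep2_ne (n := 3^(2*i'+jj+3) - 3^(i'+jj+2) * 2^(i'+1) - 2^(2*i'+jj+3))
    (e := (i'+1)+jj) (f := i'+2)
  · push_cast
    simp only [div_pow]
    field_simp
    ring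
  · apply not_dvd_helper
    intro h2
    apply odd3pow (2*i'+jj+3)
    have hX : (2:ℤ) ∣ 3^(i'+jj+2) * 2^(i'+1) := ⟨3^(i'+jj+2) * 2^i', by rw [pow_succ]; ring⟩
    have hY : (2:ℤ) ∣ (2:ℤ)^(2*i'+jj+3) := dvd_pow_self 2 (by omega)
    obtain ⟨c1, hc1⟩ := h2
    obtain ⟨c2, hc2⟩ := hX
    obtain ⟨c3, hc3⟩ := hY
    exact ⟨c1 + c2 + c3, by omega⟩

/-- injectivity of the classes `rep2 (-(3/2)^n)` -/
lemma ell_inj : Function.Injective (fun n : ℕ => rep2 (-(3/2:ℚ)^n)) := by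
  have key : ∀ i j : ℕ, i < j → rep2 (-(3/2:ℚ)^i) ≠ rep2 (-(3/2:ℚ)^j) := by
    intro i j hij
    obtain ⟨jj, rfl⟩ : ∃ jj, j = i + (jj+1) := ⟨j - i - 1, by omega⟩
    have h := term1_ne i jj
    intro hcon
    apply h
    rw [show (3/2:ℚ)^i * (-1) = -(3/2:ℚ)^i by ring, hcon]
  intro i j hij
  by_contra hne
  rcases Nat.lt_or_ge i j with h | h
  · exact key i j h hij
  · exact key j i (by omega) hij.symm

/-! ### The four sums -/

def ind (n : ℕ) (q : ℚ) : ℤ := if rep2 q = rep2 (-(3/2:ℚ)^n) then 1 else 0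

lemma ind_periodic (n : ℕ) : ∀ x, ind n (x + 2) = ind n x := by
  intro x
  unfold ind
  rw [rep2_add_two]

lemma sum1_eq (n : ℕ) :
    ∑ i ∈ Finset.range (n+1), ind n ((3/2:ℚ)^i * (-1)) = 1 := by
  rw [Finset.sum_eq_single_of_mem n (Finset.self_mem_range_succ n)]
  · unfold ind
    rw [if_pos]
    rw [show (3/2:ℚ)^n * (-1) = -(3/2:ℚ)^n by ring]
  · intro i hi hne
    unfold ind
    rw [if_neg]
    have hilt : i < n := by
      rw [Finset.mem_range] at hi
      omega
    obtain ⟨jj, rfl⟩ : ∃ jj, n = i + (jj+1) := ⟨n - i - 1, by omega⟩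
    exact term1_ne i jj

lemma sum2_eq (n : ℕ) :
    ∑ i ∈ Finset.range (n+1), ind n ((2/3:ℚ)^(i+1) * ((3/2:ℚ)^(n+1) * (-1) + -1)) = 0 := by
  have harg : ((3/2:ℚ)^(n+1) * (-1) + -1) = ((3/2:ℚ)^(n+1) * (-1) - 1) := by ring
  rw [harg]
  apply Finset.sum_eq_zero
  intro i hi
  rw [Finset.mem_range] at hi
  unfold ind
  rw [if_neg]
  match i, hi with
  | 0, _ => exact term2_ne_zero n
  | (i'+1), hi =>
    obtain ⟨jj, rfl⟩ : ∃ jj, n = (i'+1) + jj := ⟨n - i' - 1, by omega⟩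
    exact term2_ne_succ i' jj

lemma sum3_eq (n : ℕ) :
    ∑ i ∈ Finset.range (n+1), ind n ((3/2:ℚ)^i * (-(2/3:ℚ)^(n+1))) = 0 := by
  apply Finset.sum_eq_zero
  intro i hi
  rw [Finset.mem_range] at hi
  unfold ind
  rw [if_neg]
  obtain ⟨jj, rfl⟩ : ∃ jj, n = i + jj := ⟨n - i, by omega⟩
  exact term3_ne i jj

lemma sum4_eq (n : ℕ) :
    ∑ i ∈ Finset.range (n+1), ind n ((2/3:ℚ)^(i+1) * 0) = 0 := by
  apply Finset.sum_eq_zero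
  intro i _
  unfold ind
  rw [if_neg]
  exact term4_ne n i

end BSAux
namespace BSAux

/-! ### The witnesses c_d -/

def cEl (d : ℕ) : BS23 :=
  (BSt ^ d)⁻¹ * BSa ^ (1:ℤ) * BSt ^ d * BSa ^ (1:ℤ) *
    (BSt ^ d)⁻¹ * BSa ^ (-1:ℤ) * BSt ^ d * BSa ^ (-1:ℤ)

lemma cEl_ACT (n : ℕ) :
    ACT (fI (ind n)) (hfI (ind n) (ind_periodic n)) (cEl (n+1)) (0, 1) = (0, ofAdd 1) := by
  have h23 : (2/3:ℚ)^(n+1) * (3/2)^(n+1) = 1 := by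
    rw [← mul_pow]; norm_num
  have h32 : (3/2:ℚ)^(n+1) * (2/3)^(n+1) = 1 := by
    rw [← mul_pow]; norm_num
  set δ := ind n with hδdef
  set hδ := ind_periodic n
  set A := ACT (fI δ) (hfI δ hδ) with hA
  set S1 := ∑ i ∈ Finset.range (n+1), δ ((3/2:ℚ)^i * (-1)) with hS1
  set S2 := ∑ i ∈ Finset.range (n+1),
      δ ((2/3:ℚ)^(i+1) * ((3/2:ℚ)^(n+1) * (-1) + -1)) with hS2
  set S3 := ∑ i ∈ Finset.range (n+1), δ ((3/2:ℚ)^i * (-(2/3:ℚ)^(n+1))) with hS3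
  set S4 := ∑ i ∈ Finset.range (n+1), δ ((2/3:ℚ)^(i+1) * 0) with hS4
  have v1 : A (BSa ^ (-1:ℤ)) (0, 1) = (-1, 1) := by
    rw [hA, ACT_apow]
    norm_num
  have v2 : A (BSt ^ (n+1)) (-1, 1) = ((3/2:ℚ)^(n+1) * (-1), ofAdd S1) := by
    rw [hA, ACT_tpow δ hδ, mul_one, hS1]
  have v3 : A (BSa ^ (-1:ℤ)) ((3/2:ℚ)^(n+1) * (-1), ofAdd S1)
      = ((3/2:ℚ)^(n+1) * (-1) + -1, ofAdd S1) := by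
    rw [hA, ACT_apow]
    norm_num
  have v4 : A ((BSt ^ (n+1))⁻¹) ((3/2:ℚ)^(n+1) * (-1) + -1, ofAdd S1)
      = (-1 + -(2/3:ℚ)^(n+1), ofAdd (-S2) * ofAdd S1) := by
    rw [hA, ACT_tpow_inv δ hδ, hS2]
    refine Prod.ext ?_ rfl
    dsimp only
    linear_combination -h23
  have v5 : A (BSa ^ (1:ℤ)) (-1 + -(2/3:ℚ)^(n+1), ofAdd (-S2) * ofAdd S1)
      = (-(2/3:ℚ)^(n+1), ofAdd (-S2) * ofAdd S1) := by
    rw [hA, ACT_apow]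
    refine Prod.ext ?_ rfl
    dsimp only
    push_cast
    ring
  have v6 : A (BSt ^ (n+1)) (-(2/3:ℚ)^(n+1), ofAdd (-S2) * ofAdd S1)
      = (-1, ofAdd S3 * (ofAdd (-S2) * ofAdd S1)) := by
    rw [hA, ACT_tpow δ hδ, hS3]
    refine Prod.ext ?_ rfl
    dsimp only
    linear_combination -h32
  have v7 : A (BSa ^ (1:ℤ)) (-1, ofAdd S3 * (ofAdd (-S2) * ofAdd S1))
      = (0, ofAdd S3 * (ofAdd (-S2) * ofAdd S1)) := by
    rw [hA, ACT_apow]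
    refine Prod.ext ?_ rfl
    dsimp only
    push_cast
    ring
  have v8 : A ((BSt ^ (n+1))⁻¹) (0, ofAdd S3 * (ofAdd (-S2) * ofAdd S1))
      = (0, ofAdd (-S4) * (ofAdd S3 * (ofAdd (-S2) * ofAdd S1))) := by
    rw [hA, ACT_tpow_inv δ hδ, hS4]
    refine Prod.ext ?_ rfl
    dsimp only
    rw [mul_zero]
  have hval : S1 = 1 ∧ S2 = 0 ∧ S3 = 0 ∧ S4 = 0 :=
    ⟨sum1_eq n, sum2_eq n, sum3_eq n, sum4_eq n⟩
  rw [show cEl (n+1) = (BSt ^ (n+1))⁻¹ * BSa ^ (1:ℤ) * BSt ^ (n+1) * BSa ^ (1:ℤ) *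
    (BSt ^ (n+1))⁻¹ * BSa ^ (-1:ℤ) * BSt ^ (n+1) * BSa ^ (-1:ℤ) from rfl]
  rw [map_mul, map_mul, map_mul, map_mul, map_mul, map_mul, map_mul]
  simp only [Equiv.Perm.mul_apply]
  rw [v1, v2, v3, v4, v5, v6, v7, v8]
  rw [hval.1, hval.2.1, hval.2.2.1, hval.2.2.2]
  norm_num

lemma cEl_mem (n : ℕ) : cEl (n+1) ∈ StabN := by
  rw [mem_StabN]
  have h := congrArg Prod.fst (cEl_ACT n)
  rw [← ACT_fst (fI (ind n)) (hfI (ind n) (ind_periodic n)) (cEl (n+1)) ((0:ℚ), 1)]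
  exact h

/-! ### vanishing of lifts -/

lemma lift_eq_one {M : Type} [Group M] (u : ℚ → M) (w : FreeGroup ℚ)
    (h : ∀ p ∈ w.toWord, u p.1 = 1) : FreeGroup.lift u w = 1 := by
  conv_lhs => rw [← FreeGroup.mk_toWord (x := w)]
  rw [FreeGroup.lift_mk]
  apply List.prod_eq_one
  intro x hx
  rw [List.mem_map] at hx
  obtain ⟨p, hp, rfl⟩ := hx
  rcases p with ⟨q, b⟩
  have := h _ hp
  dsimp only at this
  cases b
  · simp [this]
  · simp [this]

/-! ### N is not finitely generated -/

theorem not_fg : ¬ Group.FG ↥StabN := by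
  intro hfg
  obtain ⟨S, hSc, hSfin⟩ := Group.fg_iff.1 hfg
  classical
  set T : Finset ℚ := hSfin.toFinset.biUnion
    (fun s => ((Phi fF hfF s).toWord.map (fun p => rep2 p.1)).toFinset) with hT
  obtain ⟨q, hqmem, hq⟩ :=
    (Set.infinite_range_of_injective ell_inj).exists_notMem_finset T
  obtain ⟨n, rfl⟩ := hqmem
  set F : FreeGroup ℚ →* Multiplicative ℤ := FreeGroup.lift (fI (ind n)) with hF
  set χ : ↥StabN →* Multiplicative ℤ := Phi (fI (ind n)) (hfI (ind n) (ind_periodic n)) with hχ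
  have hcomp : ∀ q : ℚ, fI (ind n) q = F (fF q) := by
    intro q
    rw [hF, show fF q = FreeGroup.of (rep2 q) from rfl, FreeGroup.lift_apply_of]
    show ofAdd (ind n q) = ofAdd (ind n (rep2 q))
    unfold ind
    rw [rep2_idem]
  have hψ : ∀ s : ↥StabN, χ s = F (Phi fF hfF s) := by
    intro s
    rw [hχ]
    exact Phi_map' F fF hfF (fI (ind n)) (hfI (ind n) (ind_periodic n)) hcomp s
  have hS1 : ∀ s ∈ S, χ s = 1 := by
    intro s hs
    rw [hψ]
    apply lift_eq_one
    intro p hp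
    show ofAdd (ind n p.1) = 1
    have hmemT : rep2 p.1 ∈ T := by
      rw [hT]
      apply Finset.mem_biUnion.2
      refine ⟨s, hSfin.mem_toFinset.2 hs, ?_⟩
      rw [List.mem_toFinset, List.mem_map]
      exact ⟨p, hp, rfl⟩
    have hind : ind n p.1 = 0 := by
      unfold ind
      rw [if_neg]
      intro hcon
      rw [hcon] at hmemT
      exact hq hmemT
    rw [hind]
    rfl
  have hker : ∀ x : ↥StabN, χ x = 1 := by
    have hle : Subgroup.closure S ≤ χ.ker :=
      (Subgroup.closure_le _).2 (fun s hs => MonoidHom.mem_ker.2 (hS1 s hs))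
    intro x
    have hx : x ∈ Subgroup.closure S := by
      rw [hSc]
      trivial
    exact MonoidHom.mem_ker.1 (hle hx)
  have hcontr : χ ⟨cEl (n+1), cEl_mem n⟩ = ofAdd 1 := by
    rw [hχ, Phi_apply]
    exact congrArg Prod.snd (cEl_ACT n)
  rw [hker ⟨cEl (n+1), cEl_mem n⟩] at hcontr
  have : (1:ℤ) = 0 := by
    have := ofAdd_eq_one.1 hcontr.symm
    exact this
  norm_num at this

end BSAux
/-- **Proposition.** With `θ : BS(2,3) → BS(2,3)` the homomorphism determined by
`θ(a) = a⁻⁵` and `θ(t) = t`, the subgroup `⋂_{k≥1} im θᵏ` of `BS(2,3)` is a free group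
and is not finitely generated. -/
theorem BS23_intersection_iterates_free_not_fg
    (θ : BS23 →* BS23) (hθa : θ BSa = BSa ^ (-5 : ℤ)) (hθt : θ BSt = BSt) :
    (∃ ι : Type, Nonempty (↥(⨅ k : ℕ, (iterHom θ (k + 1)).range) ≃* FreeGroup ι)) ∧
      ¬ Group.FG ↥(⨅ k : ℕ, (iterHom θ (k + 1)).range) := by
  rw [BSAux.iInf_eq_StabN (θ := θ) hθa hθt]
  exact ⟨BSAux.exists_free, BSAux.not_fg⟩
end
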